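/- arXiv:2303.13387 — 8 statements merged into one kernel-verified Lean document; each statement's English description precedes it below -/
import Mathlib

section
/- Let G be a group, A a subgroup of G, and γ : A → Aut(G) a function such that A is invariant under γ(A). Then any two of the following conditions imply the third: (1) γ([A, γ(A)]) = {1}; (2) γ is a homomorphism of groups; (3) γ satisfies the gamma functional equation γ(γ(h)(g) · h) = γ(g)γ(h) for all g, h ∈ A. -/
/-- Two-out-of-three lemma for gamma functions: given a subgroup `A` of `G` and
`γ : A → Aut G` with `A` invariant under `γ(A)`, any two of
(1) `γ` kills `[A, γ(A)]`, (2) `γ` is a homomorphism, (3) `γ` satisfies the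
gamma functional equation, imply the third. -/
theorem stmt0 {G : Type*} [Group G] (A : Subgroup G) (γ : A → MulAut G)
    (hinv : ∀ a b : A, γ a (b : G) ∈ A) :
    ((∀ x : A, (x : G) ∈ Subgroup.closure
        {g : G | ∃ a b : A, g = (a : G)⁻¹ * γ b (a : G)} → γ x = 1) →
      (∀ a b : A, γ (a * b) = γ a * γ b) →
      (∀ g h : A, ∀ hm : γ h (g : G) * (h : G) ∈ A,
        γ ⟨γ h (g : G) * (h : G), hm⟩ = γ g * γ h)) ∧
    ((∀ x : A, (x : G) ∈ Subgroup.closure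
        {g : G | ∃ a b : A, g = (a : G)⁻¹ * γ b (a : G)} → γ x = 1) →
      (∀ g h : A, ∀ hm : γ h (g : G) * (h : G) ∈ A,
        γ ⟨γ h (g : G) * (h : G), hm⟩ = γ g * γ h) →
      (∀ a b : A, γ (a * b) = γ a * γ b)) ∧
    ((∀ a b : A, γ (a * b) = γ a * γ b) →
      (∀ g h : A, ∀ hm : γ h (g : G) * (h : G) ∈ A,
        γ ⟨γ h (g : G) * (h : G), hm⟩ = γ g * γ h) →
      (∀ x : A, (x : G) ∈ Subgroup.closure
        {g : G | ∃ a b : A, g = (a : G)⁻¹ * γ b (a : G)} → γ x = 1)) := by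
  refine ⟨?_, ?_, ?_⟩
  · -- (1) & (2) ⇒ (3)
    intro h1 h2 g h hm
    have hx : ((g : G)⁻¹ * γ h (g : G)) ∈ A := A.mul_mem (A.inv_mem g.2) (hinv h g)
    set x : A := ⟨_, hx⟩ with hxdef
    have hx1 : γ x = 1 := h1 x (Subgroup.subset_closure ⟨g, h, rfl⟩)
    have heq : (⟨γ h (g : G) * (h : G), hm⟩ : A) = g * x * h := by
      apply Subtype.ext
      push_cast
      show (γ h) (g : G) * (h : G) = (g : G) * ((g : G)⁻¹ * γ h (g : G)) * (h : G)
      group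
    rw [heq, h2, h2, hx1, mul_one]
  · -- (1) & (3) ⇒ (2)
    intro h1 h3 a b
    have hp : γ b (a : G) ∈ A := hinv b a
    set p : A := ⟨_, hp⟩ with hpdef
    set y : A := b⁻¹ * (a⁻¹ * p) * b with hydef
    have hyc : (y : G) = (b : G)⁻¹ * ((a : G)⁻¹ * γ b (a : G)) * (b : G) := by
      rw [hydef]; push_cast; rfl
    have hyK : (y : G) ∈ Subgroup.closure
        {g : G | ∃ a b : A, g = (a : G)⁻¹ * γ b (a : G)} := by
      have : (y : G) = (((a * b : A) : G)⁻¹ * γ b ((a * b : A) : G)) *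
          (((b : A) : G)⁻¹ * γ b ((b : A) : G))⁻¹ := by
        rw [hyc]
        push_cast
        rw [map_mul]
        group
      rw [this]
      exact mul_mem (Subgroup.subset_closure ⟨a * b, b, rfl⟩)
        (inv_mem (Subgroup.subset_closure ⟨b, b, rfl⟩))
    have hy1 : γ y = 1 := h1 y hyK
    have hm1 : γ b (a : G) * (b : G) ∈ A := A.mul_mem hp b.2
    have e1 : γ (⟨γ b (a : G) * (b : G), hm1⟩ : A) = γ a * γ b := h3 a b hm1
    have hm2 : γ y ((a * b : A) : G) * (y : G) ∈ A := by
      rw [hy1]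
      exact A.mul_mem (a * b).2 y.2
    have e2 : γ (⟨γ y ((a * b : A) : G) * (y : G), hm2⟩ : A) = γ (a * b) * γ y :=
      h3 (a * b) y hm2
    have heq : (⟨γ y ((a * b : A) : G) * (y : G), hm2⟩ : A)
        = (⟨γ b (a : G) * (b : G), hm1⟩ : A) := by
      apply Subtype.ext
      simp only [hy1]
      show ((a * b : A) : G) * (y : G) = γ b (a : G) * (b : G)
      rw [hyc]
      push_cast
      group
    rw [heq, e1, hy1, mul_one] at e2
    exact e2.symm
  · -- (2) & (3) ⇒ (1)
    intro h2 h3 x hx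
    have hone : γ 1 = 1 := by
      have := h2 1 1
      rw [one_mul] at this
      exact mul_left_cancel (this.symm.trans (mul_one (γ 1)).symm)
    have hinvγ : ∀ a : A, γ a⁻¹ = (γ a)⁻¹ := by
      intro a
      have := h2 a⁻¹ a
      rw [inv_mul_cancel, hone] at this
      exact eq_inv_of_mul_eq_one_left this.symm
    -- kernel subgroup of A
    let K : Subgroup A :=
      { carrier := {a : A | γ a = 1}
        mul_mem' := by
          intro u v hu hv
          simp only [Set.mem_setOf_eq] at *
          rw [h2, hu, hv, mul_one]
        one_mem' := hone
        inv_mem' := by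
          intro u hu
          simp only [Set.mem_setOf_eq] at *
          rw [hinvγ, hu, inv_one] }
    have hle : Subgroup.closure {g : G | ∃ a b : A, g = (a : G)⁻¹ * γ b (a : G)}
        ≤ K.map A.subtype := by
      rw [Subgroup.closure_le]
      rintro s ⟨a, b, rfl⟩
      have hp : γ b (a : G) ∈ A := hinv b a
      set p : A := ⟨_, hp⟩ with hpdef
      have hm1 : γ b (a : G) * (b : G) ∈ A := A.mul_mem hp b.2
      have e1 : γ (⟨γ b (a : G) * (b : G), hm1⟩ : A) = γ a * γ b := h3 a b hm1
      have heq : (⟨γ b (a : G) * (b : G), hm1⟩ : A) = p * b := by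
        apply Subtype.ext; rfl
      rw [heq, h2] at e1
      have hpγ : γ p = γ a := mul_right_cancel e1
      refine ⟨a⁻¹ * p, ?_, rfl⟩
      show γ (a⁻¹ * p) = 1
      rw [h2, hinvγ, hpγ, inv_mul_cancel]
    obtain ⟨k, hk, hkx⟩ := hle hx
    have : x = k := Subtype.ext hkx.symm
    rw [this]
    exact hk
end

section
/- Let G be a non-abelian group, C a non-trivial subgroup of G that is abelian, characteristic in G, and satisfies C ∩ Z(G) = {1}. Let γ : G → Aut(G) be a gamma function such that for every c ∈ C there exists σ(c) ∈ C with γ(c) = ι(σ(c)⁻¹) (conjugation by the inverse of σ(c)). Then σ : C → C is an endomorphism of C. -/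
/-- Duality lemma (first part): if `C` is a nontrivial abelian characteristic
subgroup of a non-abelian group `G` with `C ∩ Z(G) = 1`, `γ` is a gamma function
on `G`, and `γ(c) = ι(σ(c)⁻¹)` (conjugation, `ι(x) : g ↦ x⁻¹ g x`) for a
function `σ : C → C`, then `σ` is an endomorphism of `C`.
Note `ι(σ(c)⁻¹) = MulAut.conj (σ c)` since `MulAut.conj y : g ↦ y g y⁻¹`. -/
theorem stmt3 {G : Type*} [Group G]
    (hna : ∃ a b : G, a * b ≠ b * a)
    (C : Subgroup G) (hC : C ≠ ⊥)
    (habel : ∀ x ∈ C, ∀ y ∈ C, x * y = y * x)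
    [C.Characteristic]
    (hz : C ⊓ Subgroup.center G = ⊥)
    (γ : G → MulAut G)
    (hGFE : ∀ g h : G, γ (γ h g * h) = γ g * γ h)
    (σ : C → C)
    (hσ : ∀ c : C, γ (c : G) = MulAut.conj ((σ c : G))) :
    ∀ c d : C, σ (c * d) = σ c * σ d := by
  intro c d
  -- γ(d)(c) = c since C is abelian
  have hfix : γ (d : G) (c : G) = (c : G) := by
    rw [hσ d]
    simp only [MulAut.conj_apply]
    have := habel _ (σ d).2 _ c.2
    rw [this, mul_assoc, mul_inv_cancel, mul_one]
  have hmul : γ ((c : G) * (d : G)) = γ (c : G) * γ (d : G) := by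
    have := hGFE (c : G) (d : G)
    rwa [hfix] at this
  -- conj (σ (c*d)) = conj (σ c * σ d)
  have hconj : MulAut.conj ((σ (c * d) : G)) = MulAut.conj ((σ c : G) * (σ d : G)) := by
    rw [map_mul]
    rw [← hσ c, ← hσ d, ← hmul, ← hσ (c * d)]
    norm_cast
  set z : C := σ (c * d) * (σ c * σ d)⁻¹ with hzdef
  have hzc : (z : G) ∈ Subgroup.center G := by
    rw [Subgroup.mem_center_iff]
    intro g
    have h1 : MulAut.conj ((z : G)) = 1 := by
      have : (z : G) = (σ (c * d) : G) * ((σ c : G) * (σ d : G))⁻¹ := by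
        push_cast [hzdef]; ring_nf
      rw [this, map_mul, map_inv, hconj, mul_inv_cancel]
    have h3 := congrArg (fun f : MulAut G => f g) h1
    simp only [MulAut.conj_apply, MulAut.one_apply] at h3
    rw [mul_inv_eq_iff_eq_mul] at h3
    exact h3.symm
  have hz1 : z = 1 := by
    have : (z : G) ∈ C ⊓ Subgroup.center G := ⟨z.2, hzc⟩
    rw [hz, Subgroup.mem_bot] at this
    exact Subtype.ext this
  rw [hzdef] at hz1
  exact mul_inv_eq_one.mp hz1
end

section
/- Let p be an odd prime and q a prime with q dividing p - 1, q > 2. A Sylow q-subgroup of GL(2, p) has order q^{2e} where q^e exactly divides p - 1, and GL(2, p) has exactly p(p+1)/2 Sylow q-subgroups, each isomorphic to C_{q^e} × C_{q^e}. -/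
open Matrix

variable {K : Type} [Field K]

/-- The diagonal embedding `Kˣ × Kˣ →* GL(2,K)`. -/
def dHom : Kˣ × Kˣ →* GL (Fin 2) K where
  toFun u := ⟨Matrix.diagonal ![(u.1 : K), u.2], Matrix.diagonal ![(u.1⁻¹ : K), u.2⁻¹], by
      rw [Matrix.diagonal_mul_diagonal]
      convert Matrix.diagonal_one using 2
      funext i; fin_cases i <;> simp, by
      rw [Matrix.diagonal_mul_diagonal]
      convert Matrix.diagonal_one using 2
      funext i; fin_cases i <;> simp⟩
  map_one' := by
    ext i j
    fin_cases i <;> fin_cases j <;> simp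
  map_mul' u v := by
    ext i j
    simp only [Units.val_mul, Matrix.GeneralLinearGroup.coe_mul]
    rw [Matrix.diagonal_mul_diagonal]
    fin_cases i <;> fin_cases j <;> simp

lemma dHom_val (u : Kˣ × Kˣ) :
    (dHom u : Matrix (Fin 2) (Fin 2) K) = Matrix.diagonal ![(u.1 : K), u.2] := rfl

lemma dHom_inj : Function.Injective (dHom (K := K)) := by
  intro u v h
  have : (dHom u : Matrix (Fin 2) (Fin 2) K) = (dHom v : Matrix (Fin 2) (Fin 2) K) := by rw [h]
  simp only [dHom_val] at this
  have h0 := congrFun (congrFun this 0) 0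
  have h1 := congrFun (congrFun this 1) 1
  simp [Matrix.diagonal_apply] at h0 h1
  ext <;> [exact h0; exact h1]

/-- The subgroup of monomial matrices in `GL(2,K)`. -/
def Wgrp (K : Type) [Field K] : Subgroup (GL (Fin 2) K) where
  carrier := {g | ((g : Matrix (Fin 2) (Fin 2) K) 0 1 = 0 ∧ (g : Matrix (Fin 2) (Fin 2) K) 1 0 = 0)
    ∨ ((g : Matrix (Fin 2) (Fin 2) K) 0 0 = 0 ∧ (g : Matrix (Fin 2) (Fin 2) K) 1 1 = 0)}
  one_mem' := by left; simp
  mul_mem' := by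
    intro a b ha hb
    simp only [Set.mem_setOf_eq, Units.val_mul, Matrix.mul_apply, Fin.sum_univ_two] at *
    rcases ha with ⟨h1, h2⟩ | ⟨h1, h2⟩ <;> rcases hb with ⟨h3, h4⟩ | ⟨h3, h4⟩ <;>
      simp [h1, h2, h3, h4]
  inv_mem' := by
    intro g hg
    have h1 : (g : Matrix (Fin 2) (Fin 2) K) * ((g⁻¹ : GL (Fin 2) K) : Matrix (Fin 2) (Fin 2) K)
        = 1 := by rw [← Units.val_mul, mul_inv_cancel, Units.val_one]
    obtain ⟨A, hA⟩ : ∃ A, A = (g : Matrix (Fin 2) (Fin 2) K) := ⟨_, rfl⟩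
    obtain ⟨B, hB⟩ : ∃ B, B = ((g⁻¹ : GL (Fin 2) K) : Matrix (Fin 2) (Fin 2) K) := ⟨_, rfl⟩
    rw [← hA, ← hB] at h1
    have e00 : A 0 0 * B 0 0 + A 0 1 * B 1 0 = 1 := by
      have := congrFun (congrFun h1 0) 0; simpa [Matrix.mul_apply, Fin.sum_univ_two] using this
    have e01 : A 0 0 * B 0 1 + A 0 1 * B 1 1 = 0 := by
      have := congrFun (congrFun h1 0) 1
      simpa [Matrix.mul_apply, Fin.sum_univ_two, Matrix.one_apply] using this
    have e10 : A 1 0 * B 0 0 + A 1 1 * B 1 0 = 0 := by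
      have := congrFun (congrFun h1 1) 0
      simpa [Matrix.mul_apply, Fin.sum_univ_two, Matrix.one_apply] using this
    have e11 : A 1 0 * B 0 1 + A 1 1 * B 1 1 = 1 := by
      have := congrFun (congrFun h1 1) 1; simpa [Matrix.mul_apply, Fin.sum_univ_two] using this
    simp only [Set.mem_setOf_eq] at hg ⊢
    rw [← hA] at hg
    rw [show (((g⁻¹ : GL (Fin 2) K) : Matrix (Fin 2) (Fin 2) K)) = B from hB.symm]
    rcases hg with ⟨hd1, hd2⟩ | ⟨hd1, hd2⟩
    · -- g diagonal
      left
      rw [hd1] at e00 e01; rw [hd2] at e10 e11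
      simp only [zero_mul, add_zero, zero_add, mul_zero] at e00 e01 e10 e11
      constructor
      · have hA00 : A 0 0 ≠ 0 := fun h => by simp [h] at e00
        exact (mul_eq_zero.1 e01).resolve_left hA00
      · have hA11 : A 1 1 ≠ 0 := fun h => by simp [h] at e11
        exact (mul_eq_zero.1 e10).resolve_left hA11
    · -- g antidiagonal
      right
      rw [hd1] at e00 e01; rw [hd2] at e10 e11
      simp only [zero_mul, add_zero, zero_add, mul_zero] at e00 e01 e10 e11
      constructor
      · have hA10 : A 1 0 ≠ 0 := fun h => by simp [h] at e11
        exact (mul_eq_zero.1 e10).resolve_left hA10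
      · have hA01 : A 0 1 ≠ 0 := fun h => by simp [h] at e00
        exact (mul_eq_zero.1 e01).resolve_left hA01

lemma mem_Wgrp {g : GL (Fin 2) K} : g ∈ Wgrp K ↔
    ((g : Matrix (Fin 2) (Fin 2) K) 0 1 = 0 ∧ (g : Matrix (Fin 2) (Fin 2) K) 1 0 = 0)
    ∨ ((g : Matrix (Fin 2) (Fin 2) K) 0 0 = 0 ∧ (g : Matrix (Fin 2) (Fin 2) K) 1 1 = 0) :=
  Iff.rfl

/-- The swap matrix as an element of `GL(2,K)`. -/
def w0 : GL (Fin 2) K :=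
  ⟨!![0,1;1,0], !![0,1;1,0],
    by ext i j; fin_cases i <;> fin_cases j <;>
      simp [Matrix.mul_apply, Fin.sum_univ_two, Matrix.one_apply],
    by ext i j; fin_cases i <;> fin_cases j <;>
      simp [Matrix.mul_apply, Fin.sum_univ_two, Matrix.one_apply]⟩

lemma w0_val : ((w0 : GL (Fin 2) K) : Matrix (Fin 2) (Fin 2) K) = !![0,1;1,0] := rfl

lemma dHom_w0_val (u : Kˣ × Kˣ) :
    ((dHom u * w0 : GL (Fin 2) K) : Matrix (Fin 2) (Fin 2) K) = !![0, (u.1 : K); (u.2 : K), 0] := by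
  rw [Units.val_mul, dHom_val, w0_val]
  ext i j
  fin_cases i <;> fin_cases j <;> simp [Matrix.mul_apply, Fin.sum_univ_two]

/-- Enumeration of the monomial subgroup. -/
def WFun : (Kˣ × Kˣ) ⊕ (Kˣ × Kˣ) → Wgrp K :=
  Sum.elim
    (fun u => ⟨dHom u, by rw [mem_Wgrp, dHom_val]; left; simp⟩)
    (fun u => ⟨dHom u * w0, by rw [mem_Wgrp, dHom_w0_val]; right; simp⟩)

lemma WFun_bij : Function.Bijective (WFun (K := K)) := by
  constructor
  · rintro (u | u) (v | v) h <;>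
      simp only [WFun, Sum.elim_inl, Sum.elim_inr, Subtype.mk.injEq] at h
    · exact congrArg Sum.inl (dHom_inj h)
    · exfalso
      have : (dHom u : Matrix (Fin 2) (Fin 2) K) 0 0
          = ((dHom v * w0 : GL (Fin 2) K) : Matrix (Fin 2) (Fin 2) K) 0 0 := by rw [h]
      rw [dHom_val, dHom_w0_val] at this
      simp at this
    · exfalso
      have : (dHom v : Matrix (Fin 2) (Fin 2) K) 0 0
          = ((dHom u * w0 : GL (Fin 2) K) : Matrix (Fin 2) (Fin 2) K) 0 0 := by rw [h]
      rw [dHom_val, dHom_w0_val] at this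
      simp at this
    · exact congrArg Sum.inr (dHom_inj (mul_right_cancel h))
  · rintro ⟨g, hg⟩
    have h1 : (g : Matrix (Fin 2) (Fin 2) K) * ((g⁻¹ : GL (Fin 2) K) : Matrix (Fin 2) (Fin 2) K)
        = 1 := by rw [← Units.val_mul, mul_inv_cancel, Units.val_one]
    have h2 : ((g⁻¹ : GL (Fin 2) K) : Matrix (Fin 2) (Fin 2) K) * (g : Matrix (Fin 2) (Fin 2) K)
        = 1 := by rw [← Units.val_mul, inv_mul_cancel, Units.val_one]
    obtain ⟨A, hA⟩ : ∃ A, A = (g : Matrix (Fin 2) (Fin 2) K) := ⟨_, rfl⟩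
    obtain ⟨B, hB⟩ : ∃ B, B = ((g⁻¹ : GL (Fin 2) K) : Matrix (Fin 2) (Fin 2) K) := ⟨_, rfl⟩
    rw [← hA, ← hB] at h1 h2
    have e00 : A 0 0 * B 0 0 + A 0 1 * B 1 0 = 1 := by
      have := congrFun (congrFun h1 0) 0; simpa [Matrix.mul_apply, Fin.sum_univ_two] using this
    have e11 : A 1 0 * B 0 1 + A 1 1 * B 1 1 = 1 := by
      have := congrFun (congrFun h1 1) 1; simpa [Matrix.mul_apply, Fin.sum_univ_two] using this
    have f00 : B 0 0 * A 0 0 + B 0 1 * A 1 0 = 1 := by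
      have := congrFun (congrFun h2 0) 0; simpa [Matrix.mul_apply, Fin.sum_univ_two] using this
    have f11 : B 1 0 * A 0 1 + B 1 1 * A 1 1 = 1 := by
      have := congrFun (congrFun h2 1) 1; simpa [Matrix.mul_apply, Fin.sum_univ_two] using this
    rw [mem_Wgrp] at hg
    rw [← hA] at hg
    rcases hg with ⟨hd1, hd2⟩ | ⟨hd1, hd2⟩
    · rw [hd1] at e00 f11; rw [hd2] at e11 f00
      simp only [zero_mul, mul_zero, add_zero, zero_add] at e00 e11 f00 f11
      refine ⟨Sum.inl (⟨A 0 0, B 0 0, e00, f00⟩, ⟨A 1 1, B 1 1, e11, f11⟩), ?_⟩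
      simp only [WFun, Sum.elim_inl, Subtype.mk.injEq]
      ext i j
      rw [dHom_val]
      fin_cases i <;> fin_cases j <;> simp [← hA, hd1, hd2, Matrix.diagonal_apply]
    · rw [hd1] at e00 f00; rw [hd2] at e11 f11
      simp only [zero_mul, mul_zero, add_zero, zero_add] at e00 e11 f00 f11
      refine ⟨Sum.inr (⟨A 0 1, B 1 0, e00, f11⟩, ⟨A 1 0, B 0 1, e11, f00⟩), ?_⟩
      simp only [WFun, Sum.elim_inr, Subtype.mk.injEq]
      ext i j
      rw [dHom_w0_val]
      fin_cases i <;> fin_cases j <;> simp [← hA, hd1, hd2]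

lemma card_Wgrp [Fintype K] : Nat.card (Wgrp K) = 2 * (Nat.card Kˣ * Nat.card Kˣ) := by
  rw [← Nat.card_congr (Equiv.ofBijective _ WFun_bij)]
  simp [Nat.card_sum, Nat.card_prod, two_mul]

lemma Dgrp_le_Wgrp (S' : Subgroup Kˣ) : Subgroup.map dHom (S'.prod S') ≤ Wgrp K := by
  rintro g ⟨⟨s, t⟩, -, rfl⟩
  rw [mem_Wgrp, dHom_val]
  left; simp

lemma normalizer_Dgrp (S' : Subgroup Kˣ) (a : Kˣ) (ha : a ∈ S') (ha1 : a ≠ 1) :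
    Subgroup.normalizer ((Subgroup.map dHom (S'.prod S') : Subgroup (GL (Fin 2) K)) : Set (GL (Fin 2) K)) = Wgrp K := by
  have ha1' : (a : K) ≠ 1 := fun h => ha1 (Units.val_eq_one.mp h)
  apply le_antisymm
  · intro g hg
    rw [Subgroup.mem_normalizer_iff] at hg
    have hmem : dHom (a, 1) ∈ Subgroup.map dHom (S'.prod S') :=
      Subgroup.mem_map_of_mem _ (Subgroup.mem_prod.mpr ⟨ha, one_mem _⟩)
    obtain ⟨⟨x, y⟩, -, hxy⟩ := (hg _).mp hmem
    have hm : g * dHom (a, 1) = dHom (x, y) * g := by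
      rw [hxy]; group
    have hmv : (g : Matrix (Fin 2) (Fin 2) K) * (dHom (a, 1) : Matrix (Fin 2) (Fin 2) K)
        = (dHom (x, y) : Matrix (Fin 2) (Fin 2) K) * (g : Matrix (Fin 2) (Fin 2) K) := by
      rw [← Units.val_mul, ← Units.val_mul, hm]
    obtain ⟨A, hA⟩ : ∃ A, A = (g : Matrix (Fin 2) (Fin 2) K) := ⟨_, rfl⟩
    rw [← hA, dHom_val, dHom_val] at hmv
    have E00 : A 0 0 * (a : K) = (x : K) * A 0 0 := by
      have := congrFun (congrFun hmv 0) 0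
      simpa [Matrix.mul_diagonal, Matrix.diagonal_mul] using this
    have E01 : A 0 1 = (x : K) * A 0 1 := by
      have := congrFun (congrFun hmv 0) 1
      simpa [Matrix.mul_diagonal, Matrix.diagonal_mul] using this
    have E10 : A 1 0 * (a : K) = (y : K) * A 1 0 := by
      have := congrFun (congrFun hmv 1) 0
      simpa [Matrix.mul_diagonal, Matrix.diagonal_mul] using this
    have E11 : A 1 1 = (y : K) * A 1 1 := by
      have := congrFun (congrFun hmv 1) 1
      simpa [Matrix.mul_diagonal, Matrix.diagonal_mul] using this
    have hdet : A 0 0 * A 1 1 - A 0 1 * A 1 0 ≠ 0 := by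
      have hu : IsUnit A := hA ▸ ⟨g, rfl⟩
      rw [Matrix.isUnit_iff_isUnit_det, Matrix.det_fin_two, isUnit_iff_ne_zero] at hu
      exact hu
    rw [mem_Wgrp, ← hA]
    by_cases hA00 : A 0 0 = 0
    · right
      refine ⟨hA00, ?_⟩
      have hA10 : A 1 0 ≠ 0 := by
        intro h; apply hdet; rw [hA00, h]; ring
      have hy : (y : K) = a := by
        have : (y : K) * A 1 0 = (a : K) * A 1 0 := by rw [mul_comm] at E10; exact E10.symm
        exact mul_right_cancel₀ hA10 this
      by_contra hA11
      apply ha1'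
      rw [hy] at E11
      have : (1 : K) * A 1 1 = (a : K) * A 1 1 := by rw [one_mul]; exact E11
      exact (mul_right_cancel₀ hA11 this).symm
    · left
      have hx : (x : K) = a := by
        have : (a : K) * A 0 0 = (x : K) * A 0 0 := by rw [mul_comm] at E00; exact E00
        exact (mul_right_cancel₀ hA00 this).symm
      have hA01 : A 0 1 = 0 := by
        by_contra hA01
        apply ha1'
        rw [hx] at E01
        have : (1 : K) * A 0 1 = (a : K) * A 0 1 := by rw [one_mul]; exact E01
        exact (mul_right_cancel₀ hA01 this).symm
      refine ⟨hA01, ?_⟩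
      have hA11 : A 1 1 ≠ 0 := by
        intro h; apply hdet; rw [hA01, h]; ring
      have hy : (y : K) = 1 := by
        have : (y : K) * A 1 1 = (1 : K) * A 1 1 := by rw [one_mul]; exact E11.symm
        exact mul_right_cancel₀ hA11 this
      by_contra hA10
      apply ha1'
      rw [hy, one_mul] at E10
      have : (a : K) * A 1 0 = (1 : K) * A 1 0 := by rw [mul_comm] at E10; rw [one_mul]; exact E10
      exact mul_right_cancel₀ hA10 this
  · intro g hg
    have key : ∀ g' : GL (Fin 2) K, g' ∈ Wgrp K → ∀ h' ∈ Subgroup.map dHom (S'.prod S'),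
        g' * h' * g'⁻¹ ∈ Subgroup.map dHom (S'.prod S') := by
      rintro g' hg' h' ⟨⟨s, t⟩, hst, rfl⟩
      obtain ⟨hs, ht⟩ := Subgroup.mem_prod.mp hst
      rw [mem_Wgrp] at hg'
      rcases hg' with ⟨h1, h2⟩ | ⟨h1, h2⟩
      · have hcomm : g' * dHom (s, t) = dHom (s, t) * g' := by
          ext i j
          simp only [Units.val_mul, dHom_val]
          fin_cases i <;> fin_cases j <;>
            simp [Matrix.mul_diagonal, Matrix.diagonal_mul, h1, h2, mul_comm]
        rw [hcomm, mul_assoc, mul_inv_cancel, mul_one]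
        exact Subgroup.mem_map_of_mem _ hst
      · have hcomm : g' * dHom (s, t) = dHom (t, s) * g' := by
          ext i j
          simp only [Units.val_mul, dHom_val]
          fin_cases i <;> fin_cases j <;>
            simp [Matrix.mul_diagonal, Matrix.diagonal_mul, h1, h2, mul_comm]
        rw [hcomm, mul_assoc, mul_inv_cancel, mul_one]
        exact Subgroup.mem_map_of_mem _ (Subgroup.mem_prod.mpr ⟨ht, hs⟩)
    rw [Subgroup.mem_normalizer_iff]
    intro h
    constructor
    · exact fun hh => key g hg h hh
    · intro hh
      have := key g⁻¹ ((Wgrp K).inv_mem hg) _ hh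
      have heq : g⁻¹ * (g * h * g⁻¹) * g⁻¹⁻¹ = h := by group
      rwa [heq] at this

set_option maxHeartbeats 1000000 in
/-- Sylow `q`-subgroups of `GL(2,p)` for `q > 2` a prime dividing `p - 1` with
`q^e ∥ p - 1`: each has order `q^{2e}` and is isomorphic to `C_{q^e} × C_{q^e}`,
and there are exactly `p(p+1)/2` of them. -/
theorem stmt5 {p q e : ℕ} [Fact p.Prime] (hp2 : 2 < p)
    (hq : q.Prime) (hq2 : 2 < q) (hqp : q ∣ p - 1)
    (he : q ^ e ∣ p - 1) (he' : ¬ q ^ (e + 1) ∣ p - 1) :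
    (∀ P : Sylow q (GL (Fin 2) (ZMod p)),
      Nat.card (P : Subgroup (GL (Fin 2) (ZMod p))) = q ^ (2 * e) ∧
      Nonempty ((P : Subgroup (GL (Fin 2) (ZMod p))) ≃*
        Multiplicative (ZMod (q ^ e)) × Multiplicative (ZMod (q ^ e)))) ∧
    Nat.card (Sylow q (GL (Fin 2) (ZMod p))) = p * (p + 1) / 2 := by
  haveI : Fact q.Prime := ⟨hq⟩
  have hpm1 : p - 1 ≠ 0 := by omega
  have he1 : 1 ≤ e := by
    by_contra h
    push_neg at h
    interval_cases e
    · exact he' (by simpa using hqp)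
  -- factorization of p - 1 at q
  have hfact : (p - 1).factorization q = e := by
    have h1 : e ≤ (p - 1).factorization q :=
      (Nat.Prime.pow_dvd_iff_le_factorization hq hpm1).mp he
    have h2 : ¬ (e + 1 ≤ (p - 1).factorization q) := fun h =>
      he' ((Nat.Prime.pow_dvd_iff_le_factorization hq hpm1).mpr h)
    omega
  have cardKx : Nat.card (ZMod p)ˣ = p - 1 := by
    rw [Nat.card_eq_fintype_card, ZMod.card_units]
  -- a Sylow q-subgroup of (ZMod p)ˣ
  obtain ⟨S⟩ : Nonempty (Sylow q (ZMod p)ˣ) := inferInstance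
  have hScard : Nat.card S = q ^ e := by
    rw [Sylow.card_eq_multiplicity, cardKx, hfact]
  -- the diagonal q-subgroup
  obtain ⟨SS, hSS⟩ : ∃ SS : Subgroup (ZMod p)ˣ, SS = (S : Subgroup (ZMod p)ˣ) := ⟨_, rfl⟩
  set D : Subgroup (GL (Fin 2) (ZMod p)) := Subgroup.map dHom (SS.prod SS) with hD
  have e1 : (SS.prod SS) ≃* D := Subgroup.equivMapOfInjective _ dHom dHom_inj
  have e2 : (SS.prod SS) ≃* SS × SS := Subgroup.prodEquiv _ _
  have hScard' : Nat.card SS = q ^ e := by rw [hSS]; exact hScard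
  have cardD : Nat.card D = q ^ (2 * e) := by
    rw [← Nat.card_congr e1.toEquiv, Nat.card_congr e2.toEquiv, Nat.card_prod, hScard',
      ← pow_add, two_mul]
  -- cardinality of GL(2,p)
  have hGL : Nat.card (GL (Fin 2) (ZMod p)) = (p - 1) ^ 2 * (p * (p + 1)) := by
    rw [Matrix.card_GL_field]
    rw [Fin.prod_univ_two]
    simp only [ZMod.card]
    obtain ⟨t, rfl⟩ : ∃ t, p = t + 1 := ⟨p - 1, by omega⟩
    rw [show ((t + 1) ^ 2 : ℕ) = (t ^ 2 + 2 * t) + 1 by ring,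
      show (t + 1 : ℕ) ^ ((0 : Fin 2) : ℕ) = 1 by norm_num,
      show (t + 1 : ℕ) ^ (((1 : Fin 2)) : ℕ) = t + 1 by norm_num,
      Nat.add_sub_cancel,
      show (t ^ 2 + 2 * t) + 1 - (t + 1) = t ^ 2 + t by omega,
      show (t + 1) - 1 = t by omega]
    ring
  have hqnp : ¬ q ∣ p := by
    intro h
    have : q ∣ 1 := by
      have := Nat.dvd_sub h hqp
      simpa [show p - (p - 1) = 1 by omega] using this
    exact hq.one_lt.ne' (Nat.dvd_one.mp this)
  have hqnp1 : ¬ q ∣ p + 1 := by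
    intro h
    have : q ∣ 2 := by
      have := Nat.dvd_sub h hqp
      simpa [show p + 1 - (p - 1) = 2 by omega] using this
    have := Nat.le_of_dvd (by norm_num) this
    omega
  have hfactG : (Nat.card (GL (Fin 2) (ZMod p))).factorization q = 2 * e := by
    rw [hGL, Nat.factorization_mul (by positivity) (by positivity),
      Nat.factorization_mul (by omega : p ≠ 0) (by omega : p + 1 ≠ 0),
      Nat.factorization_pow]
    simp [hfact, Nat.factorization_eq_zero_of_not_dvd hqnp,
      Nat.factorization_eq_zero_of_not_dvd hqnp1]
  -- the diagonal Sylow subgroup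
  let PD : Sylow q (GL (Fin 2) (ZMod p)) := Sylow.ofCard D (by rw [cardD, hfactG])
  -- cyclic structure
  haveI : NeZero (q ^ e) := ⟨pow_ne_zero _ hq.pos.ne'⟩
  have eS : SS ≃* Multiplicative (ZMod (q ^ e)) := by
    refine mulEquivOfCyclicCardEq ?_
    rw [hScard', Nat.card_congr Multiplicative.toAdd, Nat.card_zmod]
  have ePD : ∀ P : Sylow q (GL (Fin 2) (ZMod p)),
      Nonempty ((P : Subgroup (GL (Fin 2) (ZMod p))) ≃* D) := by
    intro P
    exact ⟨Sylow.equiv P PD⟩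
  constructor
  · intro P
    obtain ⟨eP⟩ := ePD P
    constructor
    · rw [Nat.card_congr eP.toEquiv, cardD]
    · exact ⟨eP.trans ((e1.symm.trans e2).trans (eS.prodCongr eS))⟩
  · -- number of Sylow subgroups
    obtain ⟨⟨a, ha⟩, ha1⟩ := Subgroup.ne_bot_iff_exists_ne_one.mp
      (show SS ≠ ⊥ by
        intro h
        rw [h, Subgroup.card_bot] at hScard'
        have : q ≤ q ^ e := Nat.le_self_pow (by omega) q
        omega)
    have ha1' : a ≠ 1 := fun h => ha1 (Subtype.ext h)
    have hnorm : Subgroup.normalizer (PD : Set (GL (Fin 2) (ZMod p))) = Wgrp (ZMod p) :=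
      normalizer_Dgrp _ a ha ha1'
    rw [Sylow.card_eq_index_normalizer PD, hnorm]
    have hmul := Subgroup.card_mul_index (Wgrp (ZMod p))
    rw [card_Wgrp, cardKx, hGL] at hmul
    obtain ⟨m, hm⟩ : ∃ m, p * (p + 1) = m := ⟨_, rfl⟩
    have hpos : 0 < (p - 1) * (p - 1) := by
      have : 2 ≤ p - 1 := by omega
      positivity
    have : (p - 1) * (p - 1) * (2 * (Wgrp (ZMod p)).index) = (p - 1) * (p - 1) * m := by
      rw [← hm]
      rw [show (p - 1) ^ 2 = (p - 1) * (p - 1) from sq (p-1) ▸ rfl] at hmul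
      linarith [hmul]
    have h2i : 2 * (Wgrp (ZMod p)).index = m := Nat.eq_of_mul_eq_mul_left hpos this
    have hme : 2 ∣ m := ⟨_, h2i.symm⟩
    rw [hm]
    omega
end

section
/- Let p be an odd prime and q > 2 a prime dividing p - 1, with q^e exactly dividing p - 1. Then the number of elements of order q in GL(2, p) equals (q² - q)·p(p+1)/2 + q - 1. -/
open Polynomial

section Aux

theorem fin2_mat_eq {R : Type*} (a b c d a' b' c' d' : R) :
    !![a,b;c,d] = !![a',b';c',d'] ↔ (a = a' ∧ b = b') ∧ c = c' ∧ d = d' := by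
  constructor
  · intro h
    exact ⟨⟨congrFun (congrFun h 0) 0, congrFun (congrFun h 0) 1⟩,
      congrFun (congrFun h 1) 0, congrFun (congrFun h 1) 1⟩
  · rintro ⟨⟨rfl, rfl⟩, rfl, rfl⟩; rfl

variable {p q : ℕ} [Fact p.Prime]

theorem idem_iff (P : Matrix (Fin 2) (Fin 2) (ZMod p)) :
    (P * P = P ∧ P ≠ 0 ∧ P ≠ 1) ↔
      (P 1 1 = 1 - P 0 0 ∧ P 0 1 * P 1 0 = P 0 0 * (1 - P 0 0)) := by
  obtain ⟨a, b, c, d, rfl⟩ : ∃ a b c d, P = !![a, b; c, d] :=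
    ⟨_, _, _, _, (Matrix.etaExpand_eq P).symm⟩
  have h0 : (0 : Matrix (Fin 2) (Fin 2) (ZMod p)) = !![0,0;0,0] := by
    ext i j; fin_cases i <;> fin_cases j <;> simp
  have h1 : (1 : Matrix (Fin 2) (Fin 2) (ZMod p)) = !![1,0;0,1] := by
    ext i j; fin_cases i <;> fin_cases j <;> simp [Matrix.one_apply]
  rw [h0, h1, Matrix.mul_fin_two]
  simp only [fin2_mat_eq, Ne, Matrix.cons_val', Matrix.cons_val_zero, Matrix.cons_val_one,
    Matrix.head_cons, Matrix.empty_val', Matrix.cons_val_fin_one]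
  simp only [Fin.isValue, Matrix.of_apply, Matrix.cons_val', Matrix.cons_val_one, Matrix.head_cons,
    Matrix.empty_val', Matrix.cons_val_fin_one, Matrix.head_fin_const, Matrix.cons_val_zero]
  constructor
  · rintro ⟨⟨⟨e1, e2⟩, e3, e4⟩, hP0, hP1⟩
    by_cases htr : a + d = 1
    · constructor
      · linear_combination htr
      · linear_combination e1
    · exfalso
      have hb : b = 0 := by
        have : b * (a + d - 1) = 0 := by linear_combination e2
        rcases mul_eq_zero.1 this with h | h
        · exact h
        · exact absurd (by linear_combination h) htr
      have hc : c = 0 := by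
        have : c * (a + d - 1) = 0 := by linear_combination e3 + c * mul_comm d a
        rcases mul_eq_zero.1 this with h | h
        · exact h
        · exact absurd (by linear_combination h) htr
      subst hb; subst hc
      have ha : a = 0 ∨ a = 1 := by
        have : a * (a - 1) = 0 := by linear_combination e1
        rcases mul_eq_zero.1 this with h | h
        · exact Or.inl h
        · exact Or.inr (by linear_combination h)
      have hd : d = 0 ∨ d = 1 := by
        have : d * (d - 1) = 0 := by linear_combination e4
        rcases mul_eq_zero.1 this with h | h
        · exact Or.inl h
        · exact Or.inr (by linear_combination h)
      rcases ha with rfl | rfl <;> rcases hd with rfl | rfl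
      · exact hP0 (by simp)
      · exact htr (by ring)
      · exact htr (by ring)
      · exact hP1 (by simp)
  · rintro ⟨e1, e2⟩
    have hd : d = 1 - a := e1
    subst hd
    refine ⟨⟨⟨by linear_combination e2 + b * mul_comm c a + mul_comm b c, by ring⟩, by ring,
      by linear_combination e2⟩, ?_, ?_⟩
    · rintro ⟨⟨rfl, _⟩, _, h4⟩
      simp at h4
    · rintro ⟨⟨rfl, _⟩, _, h4⟩
      norm_num at h4

theorem trace_of_idem {P : Matrix (Fin 2) (Fin 2) (ZMod p)}
    (h : P * P = P ∧ P ≠ 0 ∧ P ≠ 1) : Matrix.trace P = 1 := by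
  obtain ⟨h1, _⟩ := (idem_iff P).1 h
  rw [Matrix.trace_fin_two, h1]
  ring

open Finset in
theorem card_mul_eq_t {t : ZMod p} (ht : t ≠ 0) :
    Nat.card {v : ZMod p × ZMod p // v.1 * v.2 = t} = p - 1 := by
  have e : {v : ZMod p × ZMod p // v.1 * v.2 = t} ≃ {b : ZMod p // b ≠ 0} := by
    refine ⟨fun v => ⟨v.1.1, fun h => ht (by rw [← v.2, h, zero_mul])⟩,
      fun b => ⟨(b.1, b.1⁻¹ * t), by rw [← mul_assoc, mul_inv_cancel₀ b.2, one_mul]⟩,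
      ?_, fun b => rfl⟩
    rintro ⟨⟨b0, c0⟩, hv⟩
    have hb0 : b0 ≠ 0 := fun h => ht (by rw [← hv, h, zero_mul])
    refine Subtype.ext (Prod.ext_iff.2 ⟨rfl, ?_⟩)
    show b0⁻¹ * t = c0
    rw [← hv, ← mul_assoc, inv_mul_cancel₀ hb0, one_mul]
  rw [Nat.card_congr e, Nat.card_congr unitsEquivNeZero.symm, Nat.card_eq_fintype_card,
    ZMod.card_units p]

open Finset in
theorem card_mul_eq_zero :
    Nat.card {v : ZMod p × ZMod p // v.1 * v.2 = (0 : ZMod p)} = 2 * p - 1 := by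
  classical
  rw [Nat.card_eq_fintype_card, Fintype.card_subtype]
  have hfil : (univ.filter fun v : ZMod p × ZMod p => v.1 * v.2 = 0)
      = (({0} : Finset (ZMod p)) ×ˢ univ) ∪ (univ ×ˢ ({0} : Finset (ZMod p))) := by
    ext v
    simp only [Finset.mem_filter, Finset.mem_univ, true_and, Finset.mem_union,
      Finset.mem_product, Finset.mem_singleton, mul_eq_zero, and_true]
  have hcard := card_union_add_card_inter (({0} : Finset (ZMod p)) ×ˢ (univ : Finset (ZMod p)))
    ((univ : Finset (ZMod p)) ×ˢ ({0} : Finset (ZMod p)))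
  have h1 : ((({0} : Finset (ZMod p))) ×ˢ (univ : Finset (ZMod p))).card = p := by
    simp [ZMod.card p]
  have h2 : ((univ : Finset (ZMod p)) ×ˢ ({0} : Finset (ZMod p))).card = p := by
    simp [ZMod.card p]
  have h3 : ((({0} : Finset (ZMod p)) ×ˢ (univ : Finset (ZMod p)))
      ∩ ((univ : Finset (ZMod p)) ×ˢ ({0} : Finset (ZMod p)))).card = 1 := by
    have : ((({0} : Finset (ZMod p)) ×ˢ (univ : Finset (ZMod p)))
        ∩ ((univ : Finset (ZMod p)) ×ˢ ({0} : Finset (ZMod p)))) = {((0 : ZMod p), (0 : ZMod p))} := by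
      ext v; simp [Prod.ext_iff]; tauto
    rw [this, card_singleton]
  have hp : 1 ≤ p := (Fact.out : p.Prime).one_lt.le
  rw [hfil]
  omega

open Finset in
theorem card_triple (hp2 : 2 < p) :
    Nat.card {v : ZMod p × ZMod p × ZMod p // v.2.1 * v.2.2 = v.1 * (1 - v.1)} = p ^ 2 + p := by
  classical
  have e : {v : ZMod p × ZMod p × ZMod p // v.2.1 * v.2.2 = v.1 * (1 - v.1)}
      ≃ (a : ZMod p) × {w : ZMod p × ZMod p // w.1 * w.2 = a * (1 - a)} :=
    ⟨fun v => ⟨v.1.1, ⟨v.1.2, v.2⟩⟩, fun s => ⟨⟨s.1, s.2.1⟩, s.2.2⟩,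
      fun v => rfl, fun s => rfl⟩
  rw [Nat.card_congr e, Nat.card_eq_fintype_card, Fintype.card_sigma]
  have hval : ∀ a : ZMod p, Fintype.card {w : ZMod p × ZMod p // w.1 * w.2 = a * (1 - a)}
      = if a = 0 ∨ a = 1 then 2 * p - 1 else p - 1 := by
    intro a
    by_cases h : a = 0 ∨ a = 1
    · have h0 : a * (1 - a) = 0 := by rcases h with rfl | rfl <;> ring
      rw [if_pos h, ← Nat.card_eq_fintype_card, h0, card_mul_eq_zero]
    · push_neg at h
      have h0 : a * (1 - a) ≠ 0 := by
        intro hc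
        rcases mul_eq_zero.1 hc with hc | hc
        · exact h.1 hc
        · exact h.2 (by linear_combination -hc)
      rw [if_neg (by push_neg; exact h), ← Nat.card_eq_fintype_card, card_mul_eq_t h0]
  simp_rw [hval]
  rw [Finset.sum_ite, Finset.sum_const, Finset.sum_const]
  have h01 : (0 : ZMod p) ≠ 1 := zero_ne_one
  have hc1 : (univ.filter fun a : ZMod p => a = 0 ∨ a = 1).card = 2 := by
    have : (univ.filter fun a : ZMod p => a = 0 ∨ a = 1) = {0, 1} := by
      ext a; simp
    rw [this]; simp [h01]
  have hc2 : (univ.filter fun a : ZMod p => ¬(a = 0 ∨ a = 1)).card = p - 2 := by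
    rw [filter_not, card_sdiff_of_subset (filter_subset _ _), hc1, card_univ, ZMod.card p]
  rw [hc1, hc2, smul_eq_mul, smul_eq_mul]
  obtain ⟨m, rfl⟩ : ∃ m, p = m + 3 := ⟨p - 3, by omega⟩
  simp only [show m + 3 - 2 = m + 1 from rfl, show m + 3 - 1 = m + 2 from rfl,
    show 2 * (m + 3) - 1 = 2 * m + 5 from by omega]
  ring

theorem card_idem (hp2 : 2 < p) :
    Nat.card {P : Matrix (Fin 2) (Fin 2) (ZMod p) // P * P = P ∧ P ≠ 0 ∧ P ≠ 1}
      = p ^ 2 + p := by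
  have e : {P : Matrix (Fin 2) (Fin 2) (ZMod p) // P * P = P ∧ P ≠ 0 ∧ P ≠ 1}
      ≃ {v : ZMod p × ZMod p × ZMod p // v.2.1 * v.2.2 = v.1 * (1 - v.1)} := by
    refine ⟨fun P => ⟨(P.1 0 0, P.1 0 1, P.1 1 0), ((idem_iff P.1).1 P.2).2⟩,
      fun v => ⟨!![v.1.1, v.1.2.1; v.1.2.2, 1 - v.1.1], (idem_iff _).2 ⟨rfl, ?_⟩⟩, ?_, ?_⟩
    · simpa using v.2
    · rintro ⟨P, hP⟩
      have h11 := ((idem_iff P).1 hP).1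
      apply Subtype.ext
      show !![P 0 0, P 0 1; P 1 0, 1 - P 0 0] = P
      ext i j
      fin_cases i <;> fin_cases j <;> simp [h11]
    · rintro ⟨⟨a, b, c⟩, hv⟩
      rfl
  rw [Nat.card_congr e, card_triple hp2]

theorem exists_prim (hq : q.Prime) (hqp : q ∣ p - 1) : ∃ ζ : ZMod p, IsPrimitiveRoot ζ q := by
  haveI := Fact.mk hq
  obtain ⟨u, hu⟩ := exists_prime_orderOf_dvd_card (G := (ZMod p)ˣ) q
    (by rwa [ZMod.card_units p])
  exact ⟨(u : ZMod p), IsPrimitiveRoot.coe_units_iff.2 (hu ▸ IsPrimitiveRoot.orderOf u)⟩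

theorem card_roots_q (hq : q.Prime) (hqp : q ∣ p - 1) :
    Nat.card {a : ZMod p // a ^ q = 1} = q := by
  classical
  obtain ⟨ζ, hζ⟩ := exists_prim hq hqp
  rw [Nat.card_eq_fintype_card, Fintype.card_subtype]
  have : (Finset.univ.filter fun a : ZMod p => a ^ q = 1) = nthRootsFinset q (1 : ZMod p) := by
    ext a
    simp [mem_nthRootsFinset hq.pos]
  rw [this, hζ.card_nthRootsFinset]

theorem splits_Xq (hq : q.Prime) (hqp : q ∣ p - 1) :
    Splits (X ^ q - 1 : (ZMod p)[X]) := by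
  obtain ⟨ζ, hζ⟩ := exists_prim hq hqp
  rw [splits_iff_card_roots]
  have h1 : (X ^ q - 1 : (ZMod p)[X]) = X ^ q - C 1 := by rw [C_1]
  rw [h1, ← nthRoots, hζ.card_nthRoots_one, natDegree_X_pow_sub_C]

theorem squarefree_Xq (hq : q.Prime) (hqp : q ∣ p - 1) (hp2 : 2 < p) :
    Squarefree (X ^ q - 1 : (ZMod p)[X]) := by
  have hqK : (q : ZMod p) ≠ 0 := by
    rw [Ne, ZMod.natCast_eq_zero_iff]
    intro hdvd
    have hq1 : q ≤ p - 1 := Nat.le_of_dvd (by omega) hqp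
    have := Nat.le_of_dvd hq.pos hdvd
    omega
  exact (X_pow_sub_one_separable_iff.2 hqK).squarefree

theorem key_decomp (hq : q.Prime) (hqp : q ∣ p - 1) (hp2 : 2 < p)
    {A : Matrix (Fin 2) (Fin 2) (ZMod p)} (hAq : A ^ q = 1)
    (hns : ¬∃ c : ZMod p, A = c • (1 : Matrix (Fin 2) (Fin 2) (ZMod p))) :
    ∃ a b : ZMod p, a ≠ b ∧ a ^ q = 1 ∧ b ^ q = 1 ∧
      (A - a • 1) * (A - b • 1) = 0 := by
  have hint : IsIntegral (ZMod p) A := Matrix.isIntegral A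
  set m := minpoly (ZMod p) A with hm
  have hXq0 : (X ^ q - 1 : (ZMod p)[X]) ≠ 0 := by
    have : (X ^ q - C 1 : (ZMod p)[X]) ≠ 0 := (monic_X_pow_sub_C 1 hq.ne_zero).ne_zero
    rwa [C_1] at this
  have hdvd1 : m ∣ X ^ q - 1 := by
    apply minpoly.dvd
    rw [map_sub, map_pow, aeval_X, map_one, hAq, sub_self]
  have hdeg2 : m.natDegree = 2 := by
    have hle : m.natDegree ≤ 2 := by
      have := Polynomial.natDegree_le_of_dvd (Matrix.minpoly_dvd_charpoly A)
        (Matrix.charpoly_monic A).ne_zero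
      rwa [Matrix.charpoly_natDegree_eq_dim, Fintype.card_fin] at this
    have hge : 2 ≤ m.natDegree := by
      rw [minpoly.two_le_natDegree_iff hint]
      rintro ⟨c, hc⟩
      exact hns ⟨c, by rw [← hc, Algebra.algebraMap_eq_smul_one]⟩
    omega
  have hmonic : m.Monic := minpoly.monic hint
  have hsplits : Splits m :=
    Splits.of_dvd (splits_Xq hq hqp) hXq0 hdvd1
  have hroots : Multiset.card m.roots = 2 := by
    rw [splits_iff_card_roots.1 hsplits, hdeg2]
  obtain ⟨a, b, hab⟩ := Multiset.card_eq_two.1 hroots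
  have hfact : m = (X - C a) * (X - C b) := by
    have := hsplits.eq_prod_roots_of_monic hmonic
    rw [hab] at this
    simpa using this
  have root_pow : ∀ c : ZMod p, (X - C c) ∣ m → c ^ q = 1 := by
    intro c hc
    have : (X - C c) ∣ X ^ q - 1 := hc.trans hdvd1
    have he := eval_eq_zero_of_dvd_of_eval_eq_zero this (by simp : eval c (X - C c) = 0)
    have h2 : c ^ q - 1 = 0 := by simpa using he
    exact sub_eq_zero.1 h2
  have ha : a ^ q = 1 := root_pow a ⟨X - C b, hfact⟩
  have hb : b ^ q = 1 := root_pow b ⟨X - C a, by rw [hfact, mul_comm]⟩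
  have hne : a ≠ b := by
    rintro rfl
    have : (X - C a) * (X - C a) ∣ X ^ q - 1 := by
      rw [← hfact]; exact hdvd1
    exact not_isUnit_X_sub_C a (squarefree_Xq hq hqp hp2 _ this)
  refine ⟨a, b, hne, ha, hb, ?_⟩
  have := minpoly.aeval (ZMod p) A
  rw [← hm, hfact] at this
  rw [map_mul, map_sub, map_sub, aeval_X, aeval_C, aeval_C,
    Algebra.algebraMap_eq_smul_one, Algebra.algebraMap_eq_smul_one] at this
  exact this

theorem mulL (a b c d : ZMod p) {P : Matrix (Fin 2) (Fin 2) (ZMod p)} (hP : P * P = P) :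
    (a • P + b • (1 - P)) * (c • P + d • (1 - P))
      = (a * c) • P + (b * d) • (1 - P) := by
  have hPQ : P * (1 - P) = 0 := by rw [mul_sub, mul_one, hP, sub_self]
  have hQP : (1 - P) * P = 0 := by rw [sub_mul, one_mul, hP, sub_self]
  have hQQ : (1 - P) * (1 - P) = 1 - P := by rw [sub_mul, one_mul, mul_sub, mul_one, hP]; abel
  rw [add_mul, mul_add, mul_add, smul_mul_smul_comm, smul_mul_smul_comm, smul_mul_smul_comm,
    smul_mul_smul_comm, hP, hPQ, hQP, hQQ, smul_zero, smul_zero, add_zero, zero_add]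

theorem powL (a b : ZMod p) {P : Matrix (Fin 2) (Fin 2) (ZMod p)} (hP : P * P = P) (n : ℕ) :
    (a • P + b • (1 - P)) ^ n = (a ^ n) • P + (b ^ n) • (1 - P) := by
  induction n with
  | zero => simp
  | succ n ih => rw [pow_succ, ih, mulL _ _ _ _ hP, ← pow_succ, ← pow_succ]

theorem smul_one_inj {c d : ZMod p} (h : c • (1 : Matrix (Fin 2) (Fin 2) (ZMod p)) = d • 1) :
    c = d := by
  have := congrFun (congrFun h 0) 0
  simpa using this

theorem scalar_idem {e : ZMod p}
    (h : (e • (1 : Matrix (Fin 2) (Fin 2) (ZMod p))) * (e • 1) = e • 1) : e = 0 ∨ e = 1 := by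
  rw [smul_mul_smul_comm, one_mul] at h
  have : e * e = e := smul_one_inj h
  have h2 : e * (e - 1) = 0 := by linear_combination this
  rcases mul_eq_zero.1 h2 with h3 | h3
  · exact Or.inl h3
  · exact Or.inr (by linear_combination h3)

theorem nonscalarL {a b : ZMod p} (hab : a ≠ b) {P : Matrix (Fin 2) (Fin 2) (ZMod p)}
    (hP : P * P = P) (hP0 : P ≠ 0) (hP1 : P ≠ 1) :
    ¬∃ c : ZMod p, a • P + b • (1 - P) = c • 1 := by
  rintro ⟨c, hc⟩
  have hP' : P = ((a - b)⁻¹ * (c - b)) • 1 := by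
    have h1 : (a - b) • P = (c - b) • (1 : Matrix (Fin 2) (Fin 2) (ZMod p)) := by
      rw [smul_sub] at hc
      rw [sub_smul, sub_smul]
      linear_combination (norm := module) hc
    have hab' : a - b ≠ 0 := sub_ne_zero.2 hab
    rw [← one_smul (ZMod p) P, ← inv_mul_cancel₀ hab', mul_smul, h1, smul_smul]
  have := scalar_idem (e := (a - b)⁻¹ * (c - b)) (by rw [← hP', hP])
  rcases this with h | h
  · exact hP0 (by rw [hP', h, zero_smul])
  · exact hP1 (by rw [hP', h, one_smul])

end Aux

section Main

variable {p q : ℕ} [Fact p.Prime]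

/-- The subtype of "sorted" eigen-data. -/
abbrev Wtype (p q : ℕ) : Type :=
  {v : (ZMod p × ZMod p) × Matrix (Fin 2) (Fin 2) (ZMod p) //
    (v.1.1 ^ q = 1 ∧ v.1.2 ^ q = 1 ∧ (v.1.1).val < (v.1.2).val) ∧
      (v.2 * v.2 = v.2 ∧ v.2 ≠ 0 ∧ v.2 ≠ 1)}

/-- Non-scalar matrices whose q-th power is 1. -/
abbrev Ntype (p q : ℕ) : Type :=
  {A : Matrix (Fin 2) (Fin 2) (ZMod p) //
    A ^ q = 1 ∧ ¬∃ c : ZMod p, A = c • (1 : Matrix (Fin 2) (Fin 2) (ZMod p))}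

noncomputable def psi (v : Wtype p q) : Ntype p q := by
  refine ⟨v.1.1.1 • v.1.2 + v.1.1.2 • (1 - v.1.2), ?_, ?_⟩
  · rw [powL _ _ v.2.2.1, v.2.1.1, v.2.1.2.1]
    simp
  · exact nonscalarL (fun h => lt_irrefl _ (h ▸ v.2.1.2.2)) v.2.2.1 v.2.2.2.1 v.2.2.2.2

theorem two_ne_zero_zmod (hp2 : 2 < p) : (2 : ZMod p) ≠ 0 := by
  have : ((2 : ℕ) : ZMod p) = (2 : ZMod p) := by norm_cast
  rw [← this, Ne, ZMod.natCast_eq_zero_iff]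
  intro h
  have := Nat.le_of_dvd (by norm_num) h
  omega

theorem psi_bijective (hq : q.Prime) (hqp : q ∣ p - 1) (hp2 : 2 < p) :
    Function.Bijective (psi (p := p) (q := q)) := by
  constructor
  · rintro ⟨⟨⟨a, b⟩, P⟩, ⟨haq, hbq, hvlt⟩, hPP, hP0, hP1⟩
      ⟨⟨⟨a', b'⟩, P'⟩, ⟨haq', hbq', hvlt'⟩, hPP', hP0', hP1'⟩ h
    have hA : a • P + b • (1 - P) = a' • P' + b' • (1 - P') := congrArg Subtype.val h
    have hab : a ≠ b := fun hE => lt_irrefl _ (hE ▸ hvlt)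
    have hab' : a' ≠ b' := fun hE => lt_irrefl _ (hE ▸ hvlt')
    have htrP : Matrix.trace P = 1 := trace_of_idem ⟨hPP, hP0, hP1⟩
    have htrP' : Matrix.trace P' = 1 := trace_of_idem ⟨hPP', hP0', hP1'⟩
    have traceL : ∀ (x y : ZMod p) (Q : Matrix (Fin 2) (Fin 2) (ZMod p)), Matrix.trace Q = 1 →
        Matrix.trace (x • Q + y • (1 - Q)) = x + y := by
      intro x y Q hQ
      rw [Matrix.trace_add, Matrix.trace_smul, Matrix.trace_smul, Matrix.trace_sub, hQ,
        Matrix.trace_one]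
      simp only [smul_eq_mul, Fintype.card_fin]
      push_cast
      ring
    have htr : a + b = a' + b' := by
      rw [← traceL a b P htrP, ← traceL a' b' P' htrP', hA]
    have hsq : a * a + b * b = a' * a' + b' * b' := by
      have h2 : (a * a) • P + (b * b) • (1 - P) = (a' * a') • P' + (b' * b') • (1 - P') := by
        rw [← mulL _ _ _ _ hPP, ← mulL _ _ _ _ hPP', hA]
      rw [← traceL (a * a) (b * b) P htrP, ← traceL (a' * a') (b' * b') P' htrP', h2]
    have hprod : a * b = a' * b' := by
      have h2 : (2 : ZMod p) * (a * b) = 2 * (a' * b') := by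
        linear_combination (a + b + a' + b') * htr - hsq
      exact mul_left_cancel₀ (two_ne_zero_zmod hp2) h2
    have ha' : a' = a ∨ a' = b := by
      have : (a' - a) * (a' - b) = 0 := by linear_combination hprod - a' * htr
      rcases mul_eq_zero.1 this with h3 | h3
      · exact Or.inl (by linear_combination h3)
      · exact Or.inr (by linear_combination h3)
    have hb' : b' = a ∨ b' = b := by
      have : (b' - a) * (b' - b) = 0 := by linear_combination hprod - b' * htr
      rcases mul_eq_zero.1 this with h3 | h3
      · exact Or.inl (by linear_combination h3)
      · exact Or.inr (by linear_combination h3)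
    have heq : a' = a ∧ b' = b := by
      rcases ha' with rfl | rfl
      · rcases hb' with rfl | rfl
        · exact absurd htr (by intro hE; exact hab (by linear_combination -hE))
        · exact ⟨rfl, rfl⟩
      · rcases hb' with rfl | rfl
        · exact absurd hvlt' (lt_asymm hvlt)
        · exact absurd htr (by intro hE; exact hab (by linear_combination hE))
    obtain ⟨rfl, rfl⟩ := heq
    have hPeq : (a' - b') • P = (a' - b') • P' := by
      linear_combination (norm := module) hA
    have := smul_right_injective (Matrix (Fin 2) (Fin 2) (ZMod p)) (sub_ne_zero.2 hab') hPeq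
    subst this
    rfl
  · rintro ⟨A, hAq, hns⟩
    obtain ⟨a, b, hne, haq, hbq, hfac⟩ := key_decomp hq hqp hp2 hAq hns
    have hab' : a - b ≠ 0 := sub_ne_zero.2 hne
    set P : Matrix (Fin 2) (Fin 2) (ZMod p) := (a - b)⁻¹ • (A - b • 1) with hPdef
    have hstep : (a - b) • P = A - b • 1 := by
      rw [hPdef, smul_smul, mul_inv_cancel₀ hab', one_smul]
    have hcomm : (A - b • 1) * (A - a • 1) = (A - a • 1) * (A - b • 1) := by
      simp only [sub_mul, mul_sub, Matrix.mul_smul, Matrix.smul_mul, mul_one, one_mul,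
        smul_smul, mul_comm a b]
      abel
    have hsq : (A - b • 1) * (A - b • 1) = (a - b) • (A - b • 1) := by
      have h5 : (A - b • 1) * (A - b • 1) - (A - b • 1) * (A - a • 1)
          = (A - b • 1) * ((a - b) • 1) := by
        rw [← mul_sub]
        congr 1
        rw [sub_smul]
        abel
      rw [hcomm, hfac, sub_zero] at h5
      rw [h5, Matrix.mul_smul, mul_one]
    have hPP : P * P = P := by
      rw [hPdef, Matrix.smul_mul, Matrix.mul_smul, hsq, smul_smul, smul_smul]
      congr 1
      field_simp
    have hP0 : P ≠ 0 := by
      intro hE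
      rw [hE, smul_zero] at hstep
      exact hns ⟨b, by linear_combination (norm := module) -hstep⟩
    have hP1 : P ≠ 1 := by
      intro hE
      rw [hE] at hstep
      exact hns ⟨a, by linear_combination (norm := module) -hstep⟩
    have hrecon : a • P + b • (1 - P) = A := by
      have h6 : a • P + b • (1 - P) = (a - b) • P + b • 1 := by module
      rw [h6, hstep]
      abel
    have hvalne : (ZMod.val a) ≠ ZMod.val b := by
      intro hE
      exact hne (ZMod.val_injective p hE)
    rcases lt_or_gt_of_ne hvalne with hlt | hlt
    · exact ⟨⟨⟨⟨a, b⟩, P⟩, ⟨haq, hbq, hlt⟩, hPP, hP0, hP1⟩, Subtype.ext hrecon⟩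
    · refine ⟨⟨⟨⟨b, a⟩, 1 - P⟩, ⟨hbq, haq, hlt⟩, ?_, ?_, ?_⟩, Subtype.ext ?_⟩
      · rw [sub_mul, one_mul, mul_sub, mul_one, hPP]
        abel
      · intro hE
        exact hP1 (by linear_combination (norm := module) -hE)
      · intro hE
        exact hP0 (by linear_combination (norm := module) -hE)
      · show b • (1 - P) + a • (1 - (1 - P)) = A
        rw [sub_sub_cancel, ← hrecon]
        abel

end Main

section Count

variable {p q : ℕ} [Fact p.Prime]

open Finset in
theorem two_mul_cardD (hq : q.Prime) (hqp : q ∣ p - 1) :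
    2 * Nat.card {v : ZMod p × ZMod p //
        v.1 ^ q = 1 ∧ v.2 ^ q = 1 ∧ (v.1).val < (v.2).val} = q * q - q := by
  classical
  have hRcard : (univ.filter fun a : ZMod p => a ^ q = 1).card = q := by
    have := card_roots_q (p := p) hq hqp
    rwa [Nat.card_eq_fintype_card, Fintype.card_subtype] at this
  set slt := univ.filter
    (fun v : ZMod p × ZMod p => v.1 ^ q = 1 ∧ v.2 ^ q = 1 ∧ (v.1).val < (v.2).val) with hslt
  set sgt := univ.filter
    (fun v : ZMod p × ZMod p => v.1 ^ q = 1 ∧ v.2 ^ q = 1 ∧ (v.2).val < (v.1).val) with hsgt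
  set sdiag := univ.filter
    (fun v : ZMod p × ZMod p => v.1 ^ q = 1 ∧ v.2 ^ q = 1 ∧ v.1 = v.2) with hsdiag
  have hcardsub : Nat.card {v : ZMod p × ZMod p //
      v.1 ^ q = 1 ∧ v.2 ^ q = 1 ∧ (v.1).val < (v.2).val} = slt.card := by
    rw [Nat.card_eq_fintype_card, Fintype.card_subtype]
  have hdisj1 : Disjoint slt sgt := by
    rw [Finset.disjoint_left]
    intro v hv hv'
    rw [hslt, mem_filter] at hv
    rw [hsgt, mem_filter] at hv'
    omega
  have hdisj2 : Disjoint sdiag (slt ∪ sgt) := by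
    rw [Finset.disjoint_left]
    intro v hv hv'
    rw [hsdiag, mem_filter] at hv
    rw [Finset.mem_union, hslt, hsgt, mem_filter, mem_filter] at hv'
    have := hv.2.2.2
    rcases hv' with h | h <;> rw [this] at h <;> omega
  have hunion : sdiag ∪ (slt ∪ sgt)
      = (univ.filter fun a : ZMod p => a ^ q = 1) ×ˢ (univ.filter fun a : ZMod p => a ^ q = 1) := by
    ext ⟨x, y⟩
    rw [Finset.mem_union, Finset.mem_union, Finset.mem_product, hsdiag, hslt, hsgt,
      mem_filter, mem_filter, mem_filter, mem_filter, mem_filter]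
    simp only [mem_univ, true_and]
    constructor
    · rintro ((⟨h1, h2, _⟩) | (⟨h1, h2, _⟩) | (⟨h1, h2, _⟩)) <;> exact ⟨h1, h2⟩
    · rintro ⟨h1, h2⟩
      rcases lt_trichotomy (ZMod.val x) (ZMod.val y) with h | h | h
      · exact Or.inr (Or.inl ⟨h1, h2, h⟩)
      · exact Or.inl ⟨h1, h2, ZMod.val_injective p h⟩
      · exact Or.inr (Or.inr ⟨h1, h2, h⟩)
  have hswap : sgt.card = slt.card := by
    apply Finset.card_bij' (fun v _ => Prod.swap v) (fun v _ => Prod.swap v)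
    · intro v hv
      rw [hsgt, mem_filter] at hv
      rw [hslt, mem_filter]
      exact ⟨mem_univ _, hv.2.2.1, hv.2.1, hv.2.2.2⟩
    · intro v hv
      rw [hslt, mem_filter] at hv
      rw [hsgt, mem_filter]
      exact ⟨mem_univ _, hv.2.2.1, hv.2.1, hv.2.2.2⟩
    · intro v _; exact Prod.swap_swap v
    · intro v _; exact Prod.swap_swap v
  have hdiagcard : sdiag.card = q := by
    rw [← hRcard]
    apply Finset.card_bij (fun v _ => v.1)
    · intro v hv
      rw [hsdiag, mem_filter] at hv
      rw [mem_filter]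
      exact ⟨mem_univ _, hv.2.1⟩
    · intro v hv w hw hvw
      rw [hsdiag, mem_filter] at hv hw
      have h1 := hv.2.2.2
      have h2 := hw.2.2.2
      apply Prod.ext hvw
      rw [← h1, ← h2, hvw]
    · intro a ha
      rw [mem_filter] at ha
      refine ⟨(a, a), ?_, rfl⟩
      rw [hsdiag, mem_filter]
      exact ⟨mem_univ _, ha.2, ha.2, rfl⟩
  have htot := congrArg Finset.card hunion
  rw [Finset.card_union_of_disjoint hdisj2, Finset.card_union_of_disjoint hdisj1,
    Finset.card_product, hRcard, hdiagcard, hswap] at htot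
  rw [hcardsub]
  omega

open Finset in
theorem card_scalar_roots (hq : q.Prime) (hqp : q ∣ p - 1) :
    Nat.card {c : ZMod p // c ^ q = 1 ∧ c ≠ 1} = q - 1 := by
  classical
  have hRcard : (univ.filter fun a : ZMod p => a ^ q = 1).card = q := by
    have := card_roots_q (p := p) hq hqp
    rwa [Nat.card_eq_fintype_card, Fintype.card_subtype] at this
  rw [Nat.card_eq_fintype_card, Fintype.card_subtype]
  have : (univ.filter fun c : ZMod p => c ^ q = 1 ∧ c ≠ 1)
      = (univ.filter fun c : ZMod p => c ^ q = 1).erase 1 := by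
    ext c
    simp only [mem_filter, mem_erase, mem_univ, true_and]
    tauto
  rw [this, card_erase_of_mem (by simp), hRcard]

end Count

/-- The number of elements of order `q` in `GL(2,p)`, for `q > 2` a prime
dividing `p - 1`, is `(q² - q)·p(p+1)/2 + q - 1`. -/
theorem stmt6 {p q : ℕ} [Fact p.Prime] (hp2 : 2 < p)
    (hq : q.Prime) (hq2 : 2 < q) (hqp : q ∣ p - 1) :
    Nat.card {x : GL (Fin 2) (ZMod p) | orderOf x = q}
      = (q ^ 2 - q) * (p * (p + 1) / 2) + q - 1 := by
  classical
  haveI := Fact.mk hq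
  have hq0 : q - 1 + 1 = q := Nat.succ_pred_eq_of_pos hq.pos
  -- step 1: reduce to matrices
  have e1 : {x : GL (Fin 2) (ZMod p) // orderOf x = q} ≃
      {A : Matrix (Fin 2) (Fin 2) (ZMod p) // A ^ q = 1 ∧ A ≠ 1} := by
    refine ⟨fun x => ⟨(x.1 : Matrix (Fin 2) (Fin 2) (ZMod p)), ?_, ?_⟩,
      fun A => ⟨⟨A.1, A.1 ^ (q - 1), ?_, ?_⟩, ?_⟩, fun x => Subtype.ext (Units.ext rfl),
      fun A => Subtype.ext rfl⟩
    · have h : x.1 ^ q = 1 := by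
        have h2 := pow_orderOf_eq_one x.1
        rwa [x.2] at h2
      rw [← Units.val_pow_eq_pow_val, h, Units.val_one]
    · intro h
      have h1 : x.1 = 1 := Units.ext h
      have h2 := x.2
      rw [h1, orderOf_one] at h2
      exact (Nat.Prime.one_lt hq).ne' h2.symm
    · rw [← pow_succ', hq0, A.2.1]
    · rw [← pow_succ, hq0, A.2.1]
    · show orderOf _ = q
      apply orderOf_eq_prime
      · exact Units.ext (by rw [Units.val_pow_eq_pow_val]; exact A.2.1)
      · intro h
        exact A.2.2 (congrArg Units.val h)
  have hS : Nat.card {x : GL (Fin 2) (ZMod p) | orderOf x = q}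
      = Nat.card {A : Matrix (Fin 2) (Fin 2) (ZMod p) // A ^ q = 1 ∧ A ≠ 1} :=
    Nat.card_congr e1
  rw [hS]
  -- step 2: split into scalar and non-scalar parts
  have e2 : {y : {A : Matrix (Fin 2) (Fin 2) (ZMod p) // A ^ q = 1 ∧ A ≠ 1} //
      ∃ c : ZMod p, y.1 = c • 1} ≃ {c : ZMod p // c ^ q = 1 ∧ c ≠ 1} := by
    refine ⟨fun y => ⟨y.1.1 0 0, ?_⟩,
      fun c => ⟨⟨c.1 • 1, ?_, ?_⟩, ⟨c.1, rfl⟩⟩, ?_, ?_⟩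
    · obtain ⟨c, hc⟩ := y.2
      have h00 : y.1.1 0 0 = c := by rw [hc]; simp
      rw [h00]
      constructor
      · have hpow : (c • (1 : Matrix (Fin 2) (Fin 2) (ZMod p))) ^ q = 1 := by
          rw [← hc]; exact y.1.2.1
        rw [_root_.smul_pow, one_pow] at hpow
        have : c ^ q • (1 : Matrix (Fin 2) (Fin 2) (ZMod p)) = (1 : ZMod p) • 1 := by
          rw [hpow, one_smul]
        exact smul_one_inj this
      · intro hE
        exact y.1.2.2 (by rw [hc, hE, one_smul])
    · rw [_root_.smul_pow, one_pow, c.2.1, one_smul]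
    · intro hE
      exact c.2.2 (smul_one_inj (d := 1) (by rw [hE, one_smul]))
    · rintro ⟨⟨A, hA⟩, hy⟩
      obtain ⟨c, hc⟩ := hy
      apply Subtype.ext
      apply Subtype.ext
      show A 0 0 • 1 = A
      simp only at hc
      rw [hc]
      simp
    · intro c
      apply Subtype.ext
      show (c.1 • (1 : Matrix (Fin 2) (Fin 2) (ZMod p))) 0 0 = c.1
      simp
  have e3 : {y : {A : Matrix (Fin 2) (Fin 2) (ZMod p) // A ^ q = 1 ∧ A ≠ 1} //
      ¬∃ c : ZMod p, y.1 = c • 1} ≃ Ntype p q := by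
    refine ⟨fun y => ⟨y.1.1, y.1.2.1, y.2⟩,
      fun A => ⟨⟨A.1, A.2.1, fun h => A.2.2 ⟨1, by rw [h, one_smul]⟩⟩, A.2.2⟩,
      fun y => Subtype.ext (Subtype.ext rfl), fun A => Subtype.ext rfl⟩
  have hsum : Nat.card {A : Matrix (Fin 2) (Fin 2) (ZMod p) // A ^ q = 1 ∧ A ≠ 1}
      = (q - 1) + Nat.card (Ntype p q) := by
    rw [← Nat.card_congr (Equiv.sumCompl
      (fun y : {A : Matrix (Fin 2) (Fin 2) (ZMod p) // A ^ q = 1 ∧ A ≠ 1} =>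
        ∃ c : ZMod p, y.1 = c • 1)), Nat.card_sum, Nat.card_congr e2, Nat.card_congr e3,
      card_scalar_roots hq hqp]
  rw [hsum]
  -- step 3: count non-scalar part
  have e4 : Wtype p q ≃ {v : ZMod p × ZMod p //
      v.1 ^ q = 1 ∧ v.2 ^ q = 1 ∧ (v.1).val < (v.2).val} ×
      {P : Matrix (Fin 2) (Fin 2) (ZMod p) // P * P = P ∧ P ≠ 0 ∧ P ≠ 1} :=
    @Equiv.subtypeProdEquivProd (ZMod p × ZMod p) (Matrix (Fin 2) (Fin 2) (ZMod p))
      (fun w => w.1 ^ q = 1 ∧ w.2 ^ q = 1 ∧ (w.1).val < (w.2).val)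
      (fun P => P * P = P ∧ P ≠ 0 ∧ P ≠ 1)
  have hN : Nat.card (Ntype p q)
      = Nat.card {v : ZMod p × ZMod p //
          v.1 ^ q = 1 ∧ v.2 ^ q = 1 ∧ (v.1).val < (v.2).val} * (p ^ 2 + p) := by
    rw [← Nat.card_congr (Equiv.ofBijective _ (psi_bijective hq hqp hp2)),
      Nat.card_congr e4, Nat.card_prod, card_idem hp2]
  rw [hN]
  -- step 4: arithmetic
  set d := Nat.card {v : ZMod p × ZMod p //
    v.1 ^ q = 1 ∧ v.2 ^ q = 1 ∧ (v.1).val < (v.2).val} with hd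
  have h2d : 2 * d = q * q - q := two_mul_cardD hq hqp
  obtain ⟨e, he⟩ : ∃ e, p * (p + 1) = 2 * e := (Nat.even_mul_succ_self p).exists_two_nsmul _
  have hdiv : p * (p + 1) / 2 = e := by omega
  have key : (q ^ 2 - q) * (p * (p + 1) / 2) = d * (p ^ 2 + p) := by
    have h1 : q ^ 2 - q = 2 * d := by rw [h2d, pow_two]
    have h2 : p ^ 2 + p = p * (p + 1) := by ring
    rw [h1, hdiv, h2, he]
    ring
  rw [key]
  have hq3 : 3 ≤ q := hq2
  omega
end

section
/- Let p be an odd prime and q a prime with q dividing p + 1 and q > 2. Then the number of subgroups of order q in GL(2, p) equals binomial(p, 2) = p(p-1)/2. -/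
open Matrix Polynomial

section General
variable {K : Type*} [Field K] {pp : ℕ}

noncomputable def matK (pp : ℕ) (l z : K) : Matrix (Fin 2) (Fin 2) K :=
  !![(z * l^pp - z^pp * l)/(z - z^pp), (l - l^pp)/(z - z^pp);
     z * z^pp * (l^pp - l)/(z - z^pp), (l * z - l^pp * z^pp)/(z - z^pp)]

def Pm (pp : ℕ) (z : K) : Matrix (Fin 2) (Fin 2) K := !![1, 1; z, z^pp]

def Dm (pp : ℕ) (l : K) : Matrix (Fin 2) (Fin 2) K := Matrix.diagonal ![l, l^pp]

lemma det_Pm (z : K) : (Pm pp z).det = z^pp - z := by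
  simp [Pm, Matrix.det_fin_two_of]

lemma matK_mul_Pm {l z : K} (hz : z ≠ z^pp) :
    matK pp l z * Pm pp z = Pm pp z * Dm pp l := by
  have h : z - z^pp ≠ 0 := sub_ne_zero.mpr hz
  ext i j
  fin_cases i <;> fin_cases j <;>
    · simp [matK, Pm, Dm, Matrix.mul_apply, Fin.sum_univ_two, Matrix.diagonal]
      field_simp
      ring

noncomputable def PmInv {z : K} (hz : z ≠ z^pp) : Invertible (Pm pp z) := by
  apply Matrix.invertibleOfIsUnitDet
  rw [det_Pm]
  exact (sub_ne_zero.mpr (Ne.symm hz)).isUnit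

lemma eq_matK_of_conj {l z : K} (hz : z ≠ z^pp) {M : Matrix (Fin 2) (Fin 2) K}
    (h : M * Pm pp z = Pm pp z * Dm pp l) : M = matK pp l z := by
  have := PmInv (pp := pp) hz
  have h2 := matK_mul_Pm (pp := pp) (l := l) hz
  calc M = M * Pm pp z * ⅟(Pm pp z) := by rw [mul_invOf_cancel_right]
    _ = matK pp l z := by rw [h, ← h2, mul_invOf_cancel_right]

lemma matK_pow_mul_Pm {l z : K} (hz : z ≠ z^pp) (n : ℕ) :
    (matK pp l z)^n * Pm pp z = Pm pp z * (Dm pp l)^n := by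
  have h : SemiconjBy (Pm pp z) (Dm pp l) (matK pp l z) := (matK_mul_Pm hz).symm
  exact (h.pow_right n).symm

lemma Dm_pow (l : K) (n : ℕ) : (Dm pp l)^n = Matrix.diagonal ![l^n, (l^pp)^n] := by
  ext i j
  rw [Dm, Matrix.diagonal_pow]
  fin_cases i <;> fin_cases j <;> simp [Matrix.diagonal, Pi.pow_apply]

lemma det_matK_sub {l z : K} (hz : z ≠ z^pp) (x : K) :
    (matK pp l z - x • 1).det = (l - x) * (l^pp - x) := by
  have hdet : (Pm pp z).det ≠ 0 := by
    rw [det_Pm]; exact sub_ne_zero.mpr (Ne.symm hz)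
  have key : (matK pp l z - x • 1) * Pm pp z = Pm pp z * (Dm pp l - x • 1) := by
    rw [sub_mul, mul_sub, matK_mul_Pm hz, smul_mul_assoc, one_mul,
      mul_smul_comm, mul_one]
  have hc := congrArg Matrix.det key
  rw [Matrix.det_mul, Matrix.det_mul] at hc
  have hD : (Dm pp l - x • 1).det = (l - x) * (l^pp - x) := by
    rw [Matrix.det_fin_two]
    simp [Dm, Matrix.diagonal, Matrix.sub_apply, Matrix.smul_apply, Matrix.one_apply]
  rw [hD] at hc
  rw [mul_comm ((Pm pp z).det)] at hc
  exact mul_right_cancel₀ hdet hc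

lemma matK_frob {l z : K} (hz : z ≠ z^pp) (hz2 : (z^pp)^pp = z) (hl2 : (l^pp)^pp = l) :
    matK pp (l^pp) (z^pp) = matK pp l z := by
  have h1 : z - z^pp ≠ 0 := sub_ne_zero.mpr hz
  have h2 : z^pp - z ≠ 0 := sub_ne_zero.mpr (Ne.symm hz)
  ext i j
  fin_cases i <;> fin_cases j <;>
    · simp [matK, hz2, hl2]
      rw [div_eq_div_iff h2 h1]
      ring

lemma matK_entries_fixed [Fact pp.Prime] [CharP K pp] {l z : K} (hz : z ≠ z^pp)
    (hz2 : (z^pp)^pp = z) (hl2 : (l^pp)^pp = l) (i j : Fin 2) :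
    (matK pp l z i j)^pp = matK pp l z i j := by
  have h1 : z - z^pp ≠ 0 := sub_ne_zero.mpr hz
  have h2 : z^pp - z ≠ 0 := sub_ne_zero.mpr (Ne.symm hz)
  fin_cases i <;> fin_cases j <;>
    · simp [matK, div_pow, sub_pow_char, mul_pow, hz2, hl2]
      rw [div_eq_div_iff h2 h1]
      ring

lemma matK_zero_one_ne {l z : K} (hz : z ≠ z^pp) (hl : l ≠ l^pp) :
    matK pp l z 0 1 ≠ 0 := by
  show (l - l^pp)/(z - z^pp) ≠ 0
  exact div_ne_zero (sub_ne_zero.mpr hl) (sub_ne_zero.mpr hz)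

lemma mulVec_pow_entries [Fact pp.Prime] [CharP K pp] {M : Matrix (Fin 2) (Fin 2) K}
    (hM : ∀ i j, (M i j)^pp = M i j) {v w : Fin 2 → K} (h : M.mulVec v = w) :
    M.mulVec (fun i => (v i)^pp) = fun i => (w i)^pp := by
  funext i
  have hi := congrFun h i
  simp only [Matrix.mulVec, dotProduct, Fin.sum_univ_two] at hi ⊢
  calc M i 0 * v 0 ^ pp + M i 1 * v 1 ^ pp
      = (M i 0 * v 0)^pp + (M i 1 * v 1)^pp := by rw [mul_pow, mul_pow, hM i 0, hM i 1]
    _ = (M i 0 * v 0 + M i 1 * v 1)^pp := (add_pow_char (M i 0 * v 0) (M i 1 * v 1) pp).symm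
    _ = (w i)^pp := by rw [hi]

lemma mul_Pm_eq_iff {M : Matrix (Fin 2) (Fin 2) K} {l z : K} :
    M * Pm pp z = Pm pp z * Dm pp l ↔
      (M.mulVec ![1, z] = l • ![1, z] ∧ M.mulVec ![1, z^pp] = (l^pp) • ![1, z^pp]) := by
  constructor
  · intro h
    constructor <;> funext i <;>
      · have hh := congrFun (congrFun h i)
        have h0 := hh 0
        have h1 := hh 1
        fin_cases i <;>
          simp [Matrix.mul_apply, Matrix.mulVec, dotProduct, Fin.sum_univ_two, Pm, Dm,
            Matrix.diagonal] at h0 h1 ⊢ <;>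
          first
            | linear_combination h0
            | linear_combination h1
            | linear_combination h1 - h0
            | linear_combination h0 - h1
  · rintro ⟨h1, h2⟩
    ext i j
    have e1 := congrFun h1 i
    have e2 := congrFun h2 i
    fin_cases i <;> fin_cases j <;>
      simp [Matrix.mul_apply, Matrix.mulVec, dotProduct, Fin.sum_univ_two, Pm, Dm,
        Matrix.diagonal] at e1 e2 ⊢ <;>
      first
        | linear_combination e1
        | linear_combination e2

/-- Counting lemma: constant fiber size. -/
lemma card_eq_mul_of_fibers {α β : Type*} [Finite α] [Finite β] (f : α → β) (k : ℕ)
    (h : ∀ b, Nat.card {a // f a = b} = k) : Nat.card α = Nat.card β * k := by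
  classical
  have : Fintype α := Fintype.ofFinite α
  have : Fintype β := Fintype.ofFinite β
  calc Nat.card α = Fintype.card α := Nat.card_eq_fintype_card
    _ = Fintype.card (Σ b, {a // f a = b}) := Fintype.card_congr (Equiv.sigmaFiberEquiv f).symm
    _ = ∑ b : β, Fintype.card {a // f a = b} := Fintype.card_sigma
    _ = ∑ _b : β, k := by
        refine Finset.sum_congr rfl fun b _ => ?_
        rw [← Nat.card_eq_fintype_card, h b]
    _ = Nat.card β * k := by
        rw [Finset.sum_const, Finset.card_univ, smul_eq_mul, Nat.card_eq_fintype_card]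

lemma det_aeval_prod_linear_ne {K : Type*} [Field K] (M : Matrix (Fin 2) (Fin 2) K)
    (s : Finset K) (h : ∀ μ ∈ s, (M - μ • 1).det ≠ 0) :
    ((Polynomial.aeval M) (∏ μ ∈ s, (Polynomial.X - Polynomial.C μ))).det ≠ 0 := by
  classical
  induction s using Finset.induction_on with
  | empty => simp
  | insert a t hnotmem ih =>
    rw [Finset.prod_insert hnotmem, _root_.map_mul, Matrix.det_mul]
    have ha : (Polynomial.aeval M) (Polynomial.X - Polynomial.C a) = M - a • 1 := by
      simp [Algebra.algebraMap_eq_smul_one]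
    rw [ha]
    exact mul_ne_zero (h a (Finset.mem_insert_self a t))
      (ih fun μ hμ => h μ (Finset.mem_insert_of_mem hμ))


end General

section GF
variable {p q : ℕ} [Fact p.Prime]

local notation "K" => GaloisField p 2
local notation "φ" => algebraMap (ZMod p) (GaloisField p 2)

lemma frob_fixed_iff (x : K) : x ^ p = x ↔ x ∈ Set.range (φ) := by
  classical
  have : Fintype K := Fintype.ofFinite _
  constructor
  · intro hx
    have hp1 : 1 < p := (Fact.out : p.Prime).one_lt
    set f : (GaloisField p 2)[X] := X ^ p - X with hf
    have hf0 : f ≠ 0 := FiniteField.X_pow_card_sub_X_ne_zero _ hp1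
    have hdeg : f.natDegree = p := FiniteField.X_pow_card_sub_X_natDegree_eq _ hp1
    set S : Finset K := Finset.univ.image (φ) with hS
    have hinj : Function.Injective (φ) := (φ).injective
    have hScard : S.card = p := by
      rw [hS, Finset.card_image_of_injective _ hinj, Finset.card_univ, ZMod.card]
    have hroot : ∀ y ∈ S, y ∈ f.roots.toFinset := by
      intro y hy
      rw [hS, Finset.mem_image] at hy
      obtain ⟨a, -, rfl⟩ := hy
      rw [Multiset.mem_toFinset, mem_roots hf0]
      simp [hf, IsRoot, ← map_pow, ZMod.pow_card]
    have hle : f.roots.toFinset.card ≤ p := by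
      calc f.roots.toFinset.card ≤ Multiset.card f.roots := f.roots.toFinset_card_le
        _ ≤ f.natDegree := f.card_roots'
        _ = p := hdeg
    have hSeq : S = f.roots.toFinset :=
      Finset.eq_of_subset_of_card_le hroot (by rw [hScard]; exact hle)
    have hxS : x ∈ f.roots.toFinset := by
      rw [Multiset.mem_toFinset, mem_roots hf0]
      simp [hf, IsRoot, hx]
    rw [← hSeq, hS, Finset.mem_image] at hxS
    obtain ⟨a, -, ha⟩ := hxS
    exact ⟨a, ha⟩
  · rintro ⟨y, rfl⟩
    rw [← map_pow, ZMod.pow_card]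

lemma GF_pow_pp (x : K) : x ^ (p * p) = x := by
  classical
  have : Fintype K := Fintype.ofFinite _
  have hcard : Fintype.card K = p ^ 2 := by
    rw [← Nat.card_eq_fintype_card, GaloisField.card p 2 two_ne_zero]
  have := FiniteField.pow_card x
  rwa [hcard, pow_two] at this

lemma not_in_range_iff (z : K) : z ∉ Set.range (φ) ↔ z ^ p ≠ z := by
  rw [← frob_fixed_iff]

lemma order_q_not_fixed (hq : q.Prime) (hq2 : 2 < q) (hqp : q ∣ p + 1)
    {l : Kˣ} (hl : orderOf l = q) : (l : K) ^ p ≠ (l : K) := by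
  intro h
  have hp2 : 2 ≤ p := (Fact.out : p.Prime).two_le
  have hlp : l ^ p = l := Units.ext (by rw [Units.val_pow_eq_pow_val, h])
  have hl1 : l ^ (p - 1) = 1 := by
    have hpe : p - 1 + 1 = p := by omega
    have : l ^ (p - 1) * l = l := by
      rw [← pow_succ, hpe, hlp]
    exact mul_right_cancel (by rw [this, one_mul])
  have hdvd : q ∣ p - 1 := hl ▸ orderOf_dvd_of_pow_eq_one hl1
  have : q ∣ 2 := by
    have h2 : (p + 1) - (p - 1) = 2 := by omega
    exact h2 ▸ Nat.dvd_sub hqp hdvd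
  have := Nat.le_of_dvd (by norm_num) this
  omega

noncomputable def unfrob (x : K) : ZMod p := by
  classical exact if h : ∃ y, φ y = x then h.choose else 0

lemma unfrob_spec {x : K} (hx : x ^ p = x) : φ (unfrob x) = x := by
  obtain ⟨y, hy⟩ := (frob_fixed_iff x).1 hx
  have h : ∃ y, φ y = x := ⟨y, hy⟩
  rw [unfrob, dif_pos h]
  exact h.choose_spec

lemma mapMatrix_inj {A B : Matrix (Fin 2) (Fin 2) (ZMod p)}
    (h : A.map (φ) = B.map (φ)) : A = B := by
  ext i j
  have h2 : A.map (φ) i j = B.map (φ) i j := by rw [h]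
  rw [Matrix.map_apply, Matrix.map_apply] at h2
  exact (φ).injective h2


lemma exists_GL_of_pair (hq : q.Prime) (hq2 : 2 < q) (hqp : q ∣ p + 1)
    (l : Kˣ) (hl : orderOf l = q) (z : K) (hzr : z ∉ Set.range (φ)) :
    ∃ e : GL (Fin 2) (ZMod p), orderOf e = q ∧
      ((e : Matrix (Fin 2) (Fin 2) (ZMod p)).map (φ) = matK p (l : K) z) := by
  haveI := Fact.mk hq
  have hz : z ≠ z ^ p := fun h => ((not_in_range_iff z).1 hzr) h.symm
  have hz2 : (z ^ p) ^ p = z := by rw [← pow_mul]; exact GF_pow_pp z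
  have hl2 : ((l : K) ^ p) ^ p = (l : K) := by rw [← pow_mul]; exact GF_pow_pp _
  have hlq : (l : K) ^ q = 1 := by
    rw [← Units.val_pow_eq_pow_val, ← hl, pow_orderOf_eq_one, Units.val_one]
  -- the matrix over `ZMod p`
  set N : Matrix (Fin 2) (Fin 2) (ZMod p) :=
    Matrix.of fun i j => unfrob (matK p (l : K) z i j) with hN
  have hmap : N.map (φ) = matK p (l : K) z := by
    ext i j
    rw [Matrix.map_apply]
    exact unfrob_spec (matK_entries_fixed hz hz2 hl2 i j)
  have hDq : (Dm p (l : K)) ^ q = 1 := by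
    rw [Dm_pow]
    have h1 : ((l : K) ^ p) ^ q = 1 := by rw [← pow_mul, mul_comm, pow_mul, hlq, one_pow]
    rw [hlq, h1]
    have hv : ![(1 : K), 1] = fun _ => 1 := by funext i; fin_cases i <;> rfl
    rw [hv, Matrix.diagonal_one]
  have hKq : (matK p (l : K) z) ^ q = 1 := by
    have := PmInv (pp := p) hz
    have hp := matK_pow_mul_Pm (pp := p) (l := (l : K)) hz q
    rw [hDq, mul_one] at hp
    calc (matK p (l : K) z) ^ q = (matK p (l : K) z) ^ q * Pm p z * ⅟(Pm p z) := by
          rw [mul_invOf_cancel_right]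
      _ = 1 := by rw [hp, mul_invOf_self]
  have hNq : N ^ q = 1 := by
    apply mapMatrix_inj
    have : (N ^ q).map (φ) = (N.map (φ)) ^ q := by
      simp [← RingHom.mapMatrix_apply, map_pow]
    rw [this, hmap, hKq]
    simp [← RingHom.mapMatrix_apply, _root_.map_one]
  have hN1 : N ≠ 1 := by
    intro h
    have h1 : matK p (l : K) z = 1 := by
      rw [← hmap, h]
      simp [← RingHom.mapMatrix_apply, _root_.map_one]
    have := PmInv (pp := p) hz
    have hPD := matK_mul_Pm (pp := p) (l := (l : K)) hz
    rw [h1, one_mul] at hPD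
    have hD1 : Dm p (l : K) = 1 := by
      calc Dm p (l : K) = ⅟(Pm p z) * (Pm p z * Dm p (l : K)) := by
            rw [← mul_assoc, invOf_mul_self, one_mul]
        _ = 1 := by rw [← hPD, invOf_mul_self]
    have : (l : K) = 1 := by
      have := congrFun (congrFun hD1 0) 0
      simpa [Dm, Matrix.diagonal, Matrix.one_apply] using this
    have hl1 : l = 1 := Units.ext this
    rw [hl1, orderOf_one] at hl
    omega
  have hq1 : q - 1 + 1 = q := by omega
  refine ⟨⟨N, N ^ (q - 1), ?_, ?_⟩, ?_, hmap⟩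
  · rw [← pow_succ', hq1, hNq]
  · rw [← pow_succ, hq1, hNq]
  · apply orderOf_eq_prime
    · apply Units.ext
      rw [Units.val_pow_eq_pow_val]
      exact hNq
    · intro h
      exact hN1 (congrArg Units.val h)

lemma exists_pair_of_GL (hq : q.Prime) (hq2 : 2 < q) (hqp : q ∣ p + 1)
    (e : GL (Fin 2) (ZMod p)) (he : orderOf e = q) :
    ∃ (l : Kˣ) (z : K), orderOf l = q ∧ z ∉ Set.range (φ) ∧
      ((e : Matrix (Fin 2) (Fin 2) (ZMod p)).map (φ) = matK p (l : K) z) := by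
  classical
  haveI := Fact.mk hq
  haveI : Fintype K := Fintype.ofFinite _
  have hq0 : 0 < q := hq.pos
  have hq1 : q - 1 + 1 = q := by omega
  set M : Matrix (Fin 2) (Fin 2) K := (e : Matrix (Fin 2) (Fin 2) (ZMod p)).map (φ) with hM
  have hfixM : ∀ i j, (M i j)^p = M i j := fun i j => by
    rw [hM, Matrix.map_apply, ← map_pow, ZMod.pow_card]
  have hMq : M ^ q = 1 := by
    have he1 : (e : Matrix (Fin 2) (Fin 2) (ZMod p)) ^ q = 1 := by
      have : e ^ q = 1 := by rw [← he, pow_orderOf_eq_one]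
      rw [← Units.val_pow_eq_pow_val, this, Units.val_one]
    rw [hM]
    calc ((e : Matrix (Fin 2) (Fin 2) (ZMod p)).map (φ)) ^ q
        = ((e : Matrix (Fin 2) (Fin 2) (ZMod p)) ^ q).map (φ) := by
          simp [← RingHom.mapMatrix_apply, map_pow]
      _ = 1 := by rw [he1]; simp [← RingHom.mapMatrix_apply, _root_.map_one]
  have hM1 : M ≠ 1 := by
    intro h
    have : (e : Matrix (Fin 2) (Fin 2) (ZMod p)) = 1 := by
      apply mapMatrix_inj
      rw [← hM, h]
      simp [← RingHom.mapMatrix_apply, _root_.map_one]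
    have he' : e = 1 := Units.ext this
    rw [he', orderOf_one] at he
    omega
  -- a primitive q-th root of unity
  have hdvd : q ∣ Fintype.card Kˣ := by
    have hcK : Fintype.card K = p ^ 2 := by
      rw [← Nat.card_eq_fintype_card, GaloisField.card p 2 two_ne_zero]
    rw [Fintype.card_units, hcK]
    obtain ⟨c, hc⟩ := hqp
    refine ⟨c * (p - 1), ?_⟩
    have hp2 : 2 ≤ p := (Fact.out : p.Prime).two_le
    have hsq : p ^ 2 = p * p := by ring
    have hfac : p * p - 1 = (p + 1) * (p - 1) := by
      rcases Nat.exists_eq_add_of_le hp2 with ⟨n, rfl⟩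
      have h1 : (2 + n) * (2 + n) - 1 = (2 + n + 1) * (2 + n - 1) := by
        have e1 : (2 + n) * (2 + n) = n * n + 4 * n + 4 := by ring
        have e2 : (2 + n + 1) * (2 + n - 1) = (3 + n) * (1 + n) := by
          have : 2 + n - 1 = 1 + n := by omega
          rw [this]; ring
        have e3 : (3 + n) * (1 + n) = n * n + 4 * n + 3 := by ring
        omega
      exact h1
    rw [hsq, hfac, hc]
    ring
  obtain ⟨ζ, hζ⟩ := exists_prime_orderOf_dvd_card q hdvd
  have hprim : IsPrimitiveRoot ((ζ : K)) q := by
    have h := IsPrimitiveRoot.orderOf (ζ : K)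
    rwa [orderOf_units, hζ] at h
  have hfactor : (X ^ q - 1 : K[X]) = ∏ μ ∈ nthRootsFinset q (1 : K), (X - C μ) :=
    X_pow_sub_one_eq_prod hq0 hprim
  have hz0 : (Polynomial.aeval M) (X ^ q - 1 : K[X]) = 0 := by
    simp [map_sub, map_pow, Polynomial.aeval_X, hMq]
  have hex : ∃ μ ∈ nthRootsFinset q (1 : K), μ ≠ 1 ∧ (M - μ • 1).det = 0 := by
    by_contra hcon
    push_neg at hcon
    have h1mem : (1 : K) ∈ nthRootsFinset q (1 : K) := by
      rw [mem_nthRootsFinset hq0]; exact one_pow q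
    have hfac2 : (X ^ q - 1 : K[X])
        = (X - C 1) * ∏ μ ∈ (nthRootsFinset q (1 : K)).erase 1, (X - C μ) := by
      rw [hfactor, ← Finset.mul_prod_erase _ _ h1mem]
    have h0 : (M - 1) * ((Polynomial.aeval M) (∏ μ ∈ (nthRootsFinset q (1 : K)).erase 1, (X - C μ)))
        = 0 := by
      have hh := congrArg (Polynomial.aeval M) hfac2
      rw [hz0, _root_.map_mul] at hh
      have : (Polynomial.aeval M) (X - C 1 : K[X]) = M - 1 := by
        simp [Algebra.algebraMap_eq_smul_one]
      rw [this] at hh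
      exact hh.symm
    have hQ : IsUnit ((Polynomial.aeval M) (∏ μ ∈ (nthRootsFinset q (1 : K)).erase 1, (X - C μ))) := by
      rw [Matrix.isUnit_iff_isUnit_det, isUnit_iff_ne_zero]
      exact det_aeval_prod_linear_ne M _ fun μ hμ =>
        hcon μ (Finset.mem_of_mem_erase hμ) (Finset.ne_of_mem_erase hμ)
    have hM1' : M - 1 = 0 := by
      apply hQ.mul_right_cancel
      rw [h0, zero_mul]
    exact hM1 (by rwa [sub_eq_zero] at hM1')
  obtain ⟨μ, hmem, hμ1, hdet0⟩ := hex
  have hμq : μ ^ q = 1 := (mem_nthRootsFinset hq0 1).1 hmem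
  have hμunit : IsUnit μ := IsUnit.of_mul_eq_one (a := μ) (μ ^ (q - 1)) (by
    rw [← pow_succ', hq1, hμq])
  have hluval : (hμunit.unit : K) = μ := hμunit.unit_spec
  have hlu : orderOf hμunit.unit = q := by
    apply orderOf_eq_prime
    · exact Units.ext (by rw [Units.val_pow_eq_pow_val, hluval, hμq, Units.val_one])
    · intro h
      exact hμ1 (by rw [← hluval, h, Units.val_one])
  have hμfix : μ ^ p ≠ μ := by
    have := order_q_not_fixed hq hq2 hqp hlu
    rwa [hluval] at this
  obtain ⟨v, hv0, hveq⟩ := (Matrix.exists_mulVec_eq_zero_iff).2 hdet0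
  have heig : M.mulVec v = μ • v := by
    have hsub : (M - μ • 1).mulVec v = M.mulVec v - (μ • (1 : Matrix (Fin 2) (Fin 2) K)).mulVec v :=
      Matrix.sub_mulVec _ _ _
    rw [hveq] at hsub
    have : (μ • (1 : Matrix (Fin 2) (Fin 2) K)).mulVec v = μ • v := by
      rw [Matrix.smul_mulVec, Matrix.one_mulVec]
    rw [this] at hsub
    exact (sub_eq_zero.1 hsub.symm)
  have hv00 : v 0 ≠ 0 := by
    intro h0
    have hv1 : v 1 ≠ 0 := by
      intro h1
      apply hv0
      funext i; fin_cases i <;> simp [h0, h1]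
    have h11 : M 1 1 = μ := by
      have hx := congrFun heig 1
      simp [Matrix.mulVec, dotProduct, Fin.sum_univ_two, h0] at hx
      exact hx.resolve_right hv1
    exact hμfix (by rw [← h11, hfixM 1 1, h11])
  set z : K := v 1 * (v 0)⁻¹ with hzdef
  have hvz : ![(1 : K), z] = (v 0)⁻¹ • v := by
    funext i
    fin_cases i
    · simp [inv_mul_cancel₀ hv00]
    · simp [hzdef, mul_comm]
  have heig1 : M.mulVec ![1, z] = μ • ![1, z] := by
    rw [hvz, Matrix.mulVec_smul, heig, smul_comm]
  have hzfix : z ^ p ≠ z := by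
    intro hzz
    have h0 := congrFun heig1 0
    simp [Matrix.mulVec, dotProduct, Fin.sum_univ_two] at h0
    apply hμfix
    have h0' : M 0 0 + M 0 1 * z = μ := by linear_combination h0
    calc μ ^ p = (M 0 0 + M 0 1 * z) ^ p := by rw [h0']
      _ = (M 0 0) ^ p + ((M 0 1) * z) ^ p := add_pow_char _ _ p
      _ = M 0 0 + M 0 1 * z := by rw [mul_pow, hfixM, hfixM, hzz]
      _ = μ := h0'
  have hzr : z ∉ Set.range (φ) := (not_in_range_iff z).2 hzfix
  have heig2 : M.mulVec ![1, z ^ p] = (μ ^ p) • ![1, z ^ p] := by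
    have h := mulVec_pow_entries hfixM heig1
    have hv' : (fun i => ((![(1 : K), z]) i) ^ p) = ![1, z ^ p] := by
      funext i; fin_cases i <;> simp
    have hw' : (fun i => ((μ • ![(1 : K), z]) i) ^ p) = (μ ^ p) • ![1, z ^ p] := by
      funext i; fin_cases i <;> simp [mul_pow]
    rw [hv', hw'] at h
    exact h
  have hz' : z ≠ z ^ p := fun h => hzfix h.symm
  have hMP : M * Pm p z = Pm p z * Dm p μ := mul_Pm_eq_iff.mpr ⟨heig1, heig2⟩
  exact ⟨hμunit.unit, z, hlu, hzr, by rw [hluval]; exact eq_matK_of_conj hz' hMP⟩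

lemma pair_unique (hq : q.Prime) (hq2 : 2 < q) (hqp : q ∣ p + 1)
    {l l' : Kˣ} {z z' : K} (hl : orderOf l = q) (hl' : orderOf l' = q)
    (hz : z ∉ Set.range (φ)) (hz' : z' ∉ Set.range (φ))
    (h : matK p (l' : K) z' = matK p (l : K) z) :
    ((l' : K) = (l : K) ∧ z' = z) ∨ ((l' : K) = (l : K) ^ p ∧ z' = z ^ p) := by
  have hzz : z ≠ z ^ p := fun hh => ((not_in_range_iff z).1 hz) hh.symm
  have hzz' : z' ≠ z' ^ p := fun hh => ((not_in_range_iff z').1 hz') hh.symm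
  have hlfix : (l : K) ^ p ≠ (l : K) := order_q_not_fixed hq hq2 hqp hl
  have hl'fix : (l' : K) ^ p ≠ (l' : K) := order_q_not_fixed hq hq2 hqp hl'
  have hbase := mul_Pm_eq_iff.mp (matK_mul_Pm (pp := p) (l := (l : K)) hzz)
  obtain ⟨e1, e2⟩ := hbase
  have hrel : matK p (l : K) z * Pm p z' = Pm p z' * Dm p (l' : K) := by
    rw [← h]; exact matK_mul_Pm hzz'
  obtain ⟨e1', _⟩ := mul_Pm_eq_iff.mp hrel
  have uniq : ∀ (lam y y' : K),
      (matK p (l : K) z).mulVec ![1, y] = lam • ![1, y] →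
      (matK p (l : K) z).mulVec ![1, y'] = lam • ![1, y'] → y = y' := by
    intro lam y y' h1 h2
    by_contra hne
    have h01 := congrFun h1 0
    have h02 := congrFun h2 0
    simp [Matrix.mulVec, dotProduct, Fin.sum_univ_two] at h01 h02
    have hzero : matK p (l : K) z 0 1 * (y - y') = 0 := by linear_combination h01 - h02
    have hA01 : matK p (l : K) z 0 1 ≠ 0 :=
      matK_zero_one_ne hzz (fun hh => hlfix hh.symm)
    rcases mul_eq_zero.1 hzero with hc | hc
    · exact hA01 hc
    · exact hne (sub_eq_zero.1 hc)
  -- l' is an eigenvalue of matK l z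
  have hveczero : (![1, z'] : Fin 2 → K) ≠ 0 := by
    intro hh
    have := congrFun hh 0
    simp at this
  have hdet0 : (matK p (l : K) z - (l' : K) • 1).det = 0 := by
    apply (Matrix.exists_mulVec_eq_zero_iff).1
    refine ⟨![1, z'], hveczero, ?_⟩
    rw [Matrix.sub_mulVec, e1', Matrix.smul_mulVec, Matrix.one_mulVec, sub_self]
  rw [det_matK_sub hzz] at hdet0
  rcases mul_eq_zero.1 hdet0 with hc | hc
  · left
    have hll : (l' : K) = (l : K) := (sub_eq_zero.1 hc).symm
    refine ⟨hll, ?_⟩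
    apply uniq (l : K) z' z _ e1
    simpa only [hll] using e1'
  · right
    have hll : (l' : K) = (l : K) ^ p := (sub_eq_zero.1 hc).symm
    refine ⟨hll, ?_⟩
    apply uniq ((l : K) ^ p) z' (z ^ p) _ e2
    simpa only [hll] using e1'

end GF

/-- For `p` an odd prime and `q > 2` a prime dividing `p + 1`, the number of
subgroups of order `q` in `GL(2,p)` is `p(p-1)/2 = binomial(p,2)`. -/
theorem stmt8 {p q : ℕ} [Fact p.Prime] (hp2 : 2 < p)
    (hq : q.Prime) (hq2 : 2 < q) (hqp : q ∣ p + 1) :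
    Nat.card {H : Subgroup (GL (Fin 2) (ZMod p)) | Nat.card H = q}
      = p * (p - 1) / 2 := by
  classical
  haveI := Fact.mk hq
  set K' := GaloisField p 2 with hK'
  let Esub := {x : GL (Fin 2) (ZMod p) // orderOf x = q}
  let Ssub := {s : (GaloisField p 2)ˣ × GaloisField p 2 //
    orderOf s.1 = q ∧ s.2 ∉ Set.range (algebraMap (ZMod p) (GaloisField p 2))}
  -- Step 1 : counting subgroups via elements of order q
  have step1 : Nat.card Esub
      = Nat.card {H : Subgroup (GL (Fin 2) (ZMod p)) | Nat.card H = q} * (q - 1) := by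
    have hf : ∀ a : Esub, Subgroup.zpowers (a.1) ∈
        {H : Subgroup (GL (Fin 2) (ZMod p)) | Nat.card H = q} := by
      intro a
      simp only [Set.mem_setOf_eq]
      rw [Nat.card_zpowers, a.2]
    apply card_eq_mul_of_fibers (fun a : Esub =>
      (⟨Subgroup.zpowers a.1, hf a⟩ : {H : Subgroup (GL (Fin 2) (ZMod p)) | Nat.card H = q}))
    intro b
    have hb : Nat.card b.1 = q := b.2
    have eqv : {a : Esub // (⟨Subgroup.zpowers a.1, hf a⟩ :
        {H : Subgroup (GL (Fin 2) (ZMod p)) | Nat.card H = q}) = b}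
        ≃ {h : b.1 // h ≠ 1} := by
      refine ⟨?_, ?_, ?_, ?_⟩
      · refine fun a => ⟨⟨a.1.1, ?_⟩, ?_⟩
        · have hz : Subgroup.zpowers a.1.1 = b.1 := congrArg Subtype.val a.2
          rw [← hz]; exact Subgroup.mem_zpowers _
        · intro hh
          have h1 : (a.1.1 : GL (Fin 2) (ZMod p)) = 1 := congrArg Subtype.val hh
          have h2 := a.1.2
          rw [h1, orderOf_one] at h2
          omega
      · refine fun h => ⟨⟨h.1.1, ?_⟩, ?_⟩
        · have hco : orderOf (h.1.1 : GL (Fin 2) (ZMod p)) = orderOf h.1 :=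
            orderOf_injective b.1.subtype b.1.subtype_injective h.1
          have hdvd : orderOf h.1 ∣ q := by
            have := orderOf_dvd_natCard h.1; rwa [hb] at this
          have hne1 : orderOf h.1 ≠ 1 := by
            rw [Ne, orderOf_eq_one_iff]; exact h.2
          rw [hco]
          exact ((hq.eq_one_or_self_of_dvd _ hdvd).resolve_left hne1)
        · apply Subtype.ext
          show Subgroup.zpowers h.1.1 = b.1
          have hle : Subgroup.zpowers h.1.1 ≤ b.1 := Subgroup.zpowers_le.mpr h.1.2
          apply Subgroup.eq_of_le_of_card_ge hle
          rw [Nat.card_zpowers, hb]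
          have hco : orderOf (h.1.1 : GL (Fin 2) (ZMod p)) = orderOf h.1 :=
            orderOf_injective b.1.subtype b.1.subtype_injective h.1
          have hdvd : orderOf h.1 ∣ q := by
            have := orderOf_dvd_natCard h.1; rwa [hb] at this
          have hne1 : orderOf h.1 ≠ 1 := by
            rw [Ne, orderOf_eq_one_iff]; exact h.2
          rw [hco, ((hq.eq_one_or_self_of_dvd _ hdvd).resolve_left hne1)]
      · intro a; ext; rfl
      · intro h; ext; rfl
    rw [Nat.card_congr eqv]
    haveI : Fintype b.1 := Fintype.ofFinite _
    have hbf : Fintype.card b.1 = q := by rw [← Nat.card_eq_fintype_card]; exact hb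
    rw [Nat.card_eq_fintype_card]
    have : Fintype.card {h : b.1 // h ≠ 1}
        = Fintype.card b.1 - Fintype.card {h : b.1 // h = 1} := by
      exact Fintype.card_subtype_compl _
    rw [this, Fintype.card_subtype_eq (1 : b.1), hbf]
  -- Step 2 : elements of order q counted by pairs
  have hΦex : ∀ s : Ssub, ∃ e : Esub,
      ((e.1 : Matrix (Fin 2) (Fin 2) (ZMod p)).map (algebraMap (ZMod p) (GaloisField p 2))
        = matK p (s.1.1 : GaloisField p 2) s.1.2) := by
    intro s
    obtain ⟨e, he, hme⟩ := exists_GL_of_pair hq hq2 hqp s.1.1 s.2.1 s.1.2 s.2.2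
    exact ⟨⟨e, he⟩, hme⟩
  obtain ⟨Φ, hΦ⟩ := Classical.axiomOfChoice hΦex
  have step2 : Nat.card Ssub = Nat.card Esub * 2 := by
    apply card_eq_mul_of_fibers Φ 2
    intro e
    obtain ⟨l, z, hl, hzr, hMe⟩ := exists_pair_of_GL hq hq2 hqp e.1 e.2
    have hzz : z ≠ z ^ p := fun hh => ((not_in_range_iff z).1 hzr) hh.symm
    have hz2 : (z ^ p) ^ p = z := by rw [← pow_mul]; exact GF_pow_pp z
    have hl2 : ((l : GaloisField p 2) ^ p) ^ p = (l : GaloisField p 2) := by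
      rw [← pow_mul]; exact GF_pow_pp _
    set l1 : (GaloisField p 2)ˣ :=
      Units.map (↑(frobenius (GaloisField p 2) p) : GaloisField p 2 →* GaloisField p 2) l
      with hl1def
    have hl1val : (l1 : GaloisField p 2) = (l : GaloisField p 2) ^ p := by
      rw [hl1def]
      simp [frobenius_def]
    have hl1ord : orderOf l1 = q := by
      rw [hl1def]
      exact (orderOf_injective _ (Units.map_injective (frobenius (GaloisField p 2) p).injective) l).trans hl
    have hz1r : z ^ p ∉ Set.range (algebraMap (ZMod p) (GaloisField p 2)) := by
      apply (not_in_range_iff _).2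
      intro hcontra
      rw [hz2] at hcontra
      exact hzz hcontra
    set s0 : Ssub := ⟨(l, z), hl, hzr⟩ with hs0
    set s1 : Ssub := ⟨(l1, z ^ p), hl1ord, hz1r⟩ with hs1
    have hmatK_s1 : matK p (l1 : GaloisField p 2) (z ^ p) = matK p (l : GaloisField p 2) z := by
      rw [hl1val]
      exact matK_frob hzz hz2 hl2
    have em : ∀ s : Ssub, matK p (s.1.1 : GaloisField p 2) s.1.2
        = matK p (l : GaloisField p 2) z → Φ s = e := by
      intro s hs
      apply Subtype.ext
      apply Units.ext
      apply mapMatrix_inj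
      rw [hΦ s, hs, ← hMe]
    have hf : Function.Bijective (fun b : Bool =>
        (cond b ⟨s1, em s1 hmatK_s1⟩ ⟨s0, em s0 rfl⟩ : {s : Ssub // Φ s = e})) := by
      constructor
      · intro b1 b2 hb
        cases b1 <;> cases b2
        · rfl
        · exfalso
          have hzc := congrArg (fun x : {s : Ssub // Φ s = e} => x.1.1.2) hb
          exact hzz (by simpa using hzc)
        · exfalso
          have hzc := congrArg (fun x : {s : Ssub // Φ s = e} => x.1.1.2) hb
          exact hzz (by simpa using hzc.symm)
        · rfl
      · rintro ⟨⟨⟨l', z'⟩, hl', hz'⟩, hfib⟩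
        have hmm : matK p (l' : GaloisField p 2) z' = matK p (l : GaloisField p 2) z := by
          have h1 := hΦ ⟨(l', z'), hl', hz'⟩
          rw [hfib] at h1
          rw [← h1, hMe]
        rcases pair_unique hq hq2 hqp hl hl' hzr hz' hmm with ⟨hc1, hc2⟩ | ⟨hc1, hc2⟩
        · exact ⟨false, Subtype.ext (Subtype.ext
            (Prod.ext (Units.ext hc1).symm hc2.symm))⟩
        · exact ⟨true, Subtype.ext (Subtype.ext
            (Prod.ext (Units.ext (by rw [hc1, hl1val] : (l' : GaloisField p 2) = (l1 : GaloisField p 2))).symm hc2.symm))⟩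
    rw [Nat.card_congr (Equiv.ofBijective _ hf).symm]
    simp
  -- Step 3 : cardinality of the pair set
  haveI : Fintype (GaloisField p 2) := Fintype.ofFinite _
  have hcK : Fintype.card (GaloisField p 2) = p ^ 2 := by
    rw [← Nat.card_eq_fintype_card, GaloisField.card p 2 two_ne_zero]
  have hdvdq : q ∣ Fintype.card (GaloisField p 2)ˣ := by
    rw [Fintype.card_units, hcK]
    obtain ⟨c, hc⟩ := hqp
    refine ⟨c * (p - 1), ?_⟩
    have hsq : p ^ 2 = p * p := by ring
    have hfac : p * p - 1 = (p + 1) * (p - 1) := by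
      rcases Nat.exists_eq_add_of_le (le_of_lt hp2) with ⟨n, rfl⟩
      have e1 : (2 + n) * (2 + n) = n * n + 4 * n + 4 := by ring
      have e2 : (2 + n + 1) * (2 + n - 1) = (3 + n) * (1 + n) := by
        have h3 : 2 + n - 1 = 1 + n := by omega
        rw [h3]; ring
      have e3 : (3 + n) * (1 + n) = n * n + 4 * n + 3 := by ring
      omega
    rw [hsq, hfac, hc]
    ring
  have hcard1 : Nat.card {l : (GaloisField p 2)ˣ // orderOf l = q} = q - 1 := by
    rw [Nat.card_eq_fintype_card, Fintype.card_subtype]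
    rw [IsCyclic.card_orderOf_eq_totient hdvdq]
    exact Nat.totient_prime hq
  have hcard2 : Nat.card {z : GaloisField p 2 //
      z ∉ Set.range (algebraMap (ZMod p) (GaloisField p 2))} = p ^ 2 - p := by
    rw [Nat.card_eq_fintype_card]
    have hcompl : Fintype.card {z : GaloisField p 2 //
        ¬ z ∈ Set.range (algebraMap (ZMod p) (GaloisField p 2))}
        = Fintype.card (GaloisField p 2) - Fintype.card {z : GaloisField p 2 //
          z ∈ Set.range (algebraMap (ZMod p) (GaloisField p 2))} :=
      Fintype.card_subtype_compl _
    rw [hcompl, hcK]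
    have hrange : Fintype.card {z : GaloisField p 2 //
        z ∈ Set.range (algebraMap (ZMod p) (GaloisField p 2))} = p := by
      rw [← Nat.card_eq_fintype_card]
      have : Nat.card (Set.range (algebraMap (ZMod p) (GaloisField p 2)))
          = Nat.card (ZMod p) :=
        Nat.card_range_of_injective (algebraMap (ZMod p) (GaloisField p 2)).injective
      rw [show {z : GaloisField p 2 //
        z ∈ Set.range (algebraMap (ZMod p) (GaloisField p 2))}
        = ↥(Set.range (algebraMap (ZMod p) (GaloisField p 2))) from rfl, this, Nat.card_zmod]
    rw [hrange]
  have step3 : Nat.card Ssub = (q - 1) * (p ^ 2 - p) := by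
    have heqv : Ssub ≃ {l : (GaloisField p 2)ˣ // orderOf l = q} ×
        {z : GaloisField p 2 // z ∉ Set.range (algebraMap (ZMod p) (GaloisField p 2))} :=
      Equiv.subtypeProdEquivProd
        (p := fun l : (GaloisField p 2)ˣ => orderOf l = q)
        (q := fun z : GaloisField p 2 => z ∉ Set.range (algebraMap (ZMod p) (GaloisField p 2)))
    rw [Nat.card_congr heqv, Nat.card_prod, hcard1, hcard2]
  -- final arithmetic
  set N := Nat.card {H : Subgroup (GL (Fin 2) (ZMod p)) | Nat.card H = q} with hN
  have hkey : (q - 1) * (N * 2) = (q - 1) * (p ^ 2 - p) := by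
    rw [← step3, step2, step1]
    ring
  have hq1pos : 0 < q - 1 := by omega
  have hN2 : N * 2 = p ^ 2 - p := Nat.eq_of_mul_eq_mul_left hq1pos hkey
  have hp2p : p ^ 2 - p = p * (p - 1) := by
    rcases Nat.exists_eq_add_of_le (le_of_lt hp2) with ⟨n, rfl⟩
    have e1 : (2 + n) ^ 2 = n * n + 4 * n + 4 := by ring
    have e2 : (2 + n) * (2 + n - 1) = (2 + n) * (1 + n) := by
      have h3 : 2 + n - 1 = 1 + n := by omega
      rw [h3]
    have e3 : (2 + n) * (1 + n) = n * n + 3 * n + 2 := by ring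
    omega
  rw [hp2p] at hN2
  set m := p * (p - 1) with hm
  omega
end

section
/- Let G be a group of order p²q where p > 2, with elementary abelian characteristic Sylow p-subgroup A, and suppose every p-element of Aut(G) of order p is an inner automorphism by an element of A (i.e., the Sylow p-subgroup of Aut(G) equals ι(A)). If γ is a gamma function on G, then the restriction of γ to A is a group homomorphism A → Aut(G), and there exists σ ∈ End(A) with γ(a) = ι(a^{-σ}) for all a ∈ A. -/
/-- If `G` has order `p²q` (`p > 2`, `q ∣ p - 1`), trivial centre, a
characteristic elementary abelian Sylow `p`-subgroup `A`, and the Sylow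
`p`-subgroup of `Aut(G)` equals `ι(A)` (inner automorphisms by elements of
`A`), then for any gamma function `γ` on `G`, the restriction of `γ` to `A` is
a homomorphism, given by `γ(a) = ι(σ(a)⁻¹)` for some endomorphism `σ` of `A`
(note `ι(σ(a)⁻¹) = MulAut.conj (σ a)` since `ι(x) : g ↦ x⁻¹ g x`). -/
theorem stmt14 {G : Type*} [Group G] [Fintype G] {p q : ℕ}
    (hp : p.Prime) (hq : q.Prime) (hp2 : 2 < p) (hqp : q ∣ p - 1)
    (hcard : Fintype.card G = p ^ 2 * q)
    (A : Subgroup G) [A.Characteristic]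
    (hA : Nat.card A = p ^ 2) (hel : ∀ x ∈ A, x ^ p = 1)
    (hcenter : Subgroup.center G = ⊥)
    (hSyl : ∀ P : Sylow p (MulAut G),
      (P : Subgroup (MulAut G)) = Subgroup.map (MulAut.conj : G →* MulAut G) A)
    (γ : G → MulAut G)
    (hGFE : ∀ g h : G, γ (γ h g * h) = γ g * γ h) :
    (∀ a ∈ A, ∀ b ∈ A, γ (a * b) = γ a * γ b) ∧
    ∃ σ : A →* A, ∀ a : A, γ (a : G) = MulAut.conj ((σ a : G)) := by
  classical
  haveI : Fact p.Prime := ⟨hp⟩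
  haveI : Finite (MulAut G) :=
    Finite.of_injective (fun f : MulAut G => (f : G → G)) fun f g h =>
      MulEquiv.ext (congrFun h)
  -- A is preserved by all automorphisms
  have hchar : ∀ (φ : MulAut G) (x : G), x ∈ A → φ x ∈ A := by
    intro φ x hx
    have h2 := Subgroup.characteristic_iff_map_eq.mp ‹A.Characteristic› φ
    rw [← h2]
    exact ⟨x, hx, rfl⟩
  -- γ 1 = 1
  have h1 : γ 1 = 1 := by
    have e := hGFE 1 1
    rw [map_one, one_mul] at e
    exact left_eq_mul.mp e
  -- the image of A under γ is closed under multiplication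
  set S : Set (MulAut G) := γ '' (A : Set G) with hS
  have hmulS : ∀ x ∈ S, ∀ y ∈ S, x * y ∈ S := by
    rintro x ⟨a, ha, rfl⟩ y ⟨b, hb, rfl⟩
    exact ⟨γ b a * b, A.mul_mem (hchar (γ b) a ha) hb, hGFE a b⟩
  have hpowS : ∀ x ∈ S, ∀ n : ℕ, x ^ (n + 1) ∈ S := by
    intro x hx n
    induction n with
    | zero => simpa using hx
    | succ n ih => rw [pow_succ]; exact hmulS _ ih _ hx
  -- so it is a subgroup
  set Γ : Subgroup (MulAut G) :=
    { carrier := S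
      one_mem' := ⟨1, A.one_mem, h1⟩
      mul_mem' := fun hx hy => hmulS _ hx _ hy
      inv_mem' := by
        intro x hx
        have hm0 : 0 < orderOf x := orderOf_pos x
        have key : x ^ (orderOf x * 2 - 1) = x⁻¹ := by
          have h2 : x ^ (orderOf x * 2 - 1) * x = 1 := by
            rw [← pow_succ, Nat.sub_add_cancel (by omega), pow_mul,
              pow_orderOf_eq_one, one_pow]
          exact eq_inv_of_mul_eq_one_left h2
        have : orderOf x * 2 - 1 = (orderOf x * 2 - 2) + 1 := by omega
        rw [← key, this]
        exact hpowS _ hx _ } with hΓ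
  have hΓmem : ∀ c : ↥Γ, ∃ a, a ∈ A ∧ γ a = ↑c := fun c => c.2
  choose s hsA hsγ using hΓmem
  -- the "kernel" of γ on A
  set K : Type _ := { x : G // x ∈ A ∧ γ x = 1 } with hK
  set F : ↥Γ × K → ↥A := fun ck =>
    ⟨γ (s ck.1) ↑ck.2 * s ck.1,
      A.mul_mem (hchar (γ (s ck.1)) _ ck.2.2.1) (hsA ck.1)⟩ with hF
  have hFγ : ∀ ck : ↥Γ × K, γ ↑(F ck) = ↑ck.1 := by
    rintro ⟨c, k⟩
    show γ (γ (s c) ↑k * s c) = ↑c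
    rw [hGFE, k.2.2, one_mul, hsγ]
  have hFbij : Function.Bijective F := by
    constructor
    · rintro ⟨c, k⟩ ⟨c', k'⟩ h
      have hval : γ (s c) ↑k * s c = γ (s c') ↑k' * s c' := Subtype.ext_iff.mp h
      have hcc : c = c' := by
        apply Subtype.ext
        have h2 := congrArg (fun z : ↥A => γ ↑z) h
        rw [hFγ ⟨c, k⟩, hFγ ⟨c', k'⟩] at h2
        exact h2
      subst hcc
      have hkk : (↑k : G) = ↑k' := (γ (s c)).injective (mul_right_cancel hval)
      rw [Prod.mk.injEq]
      exact ⟨rfl, Subtype.ext hkk⟩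
    · rintro ⟨a, ha⟩
      set c : ↥Γ := ⟨γ a, ⟨a, ha, rfl⟩⟩ with hc
      set k0 : G := (γ (s c))⁻¹ (a * (s c)⁻¹) with hk0
      have hk0A : k0 ∈ A :=
        hchar ((γ (s c))⁻¹) _ (A.mul_mem ha (A.inv_mem (hsA c)))
      have heq : γ (s c) k0 * s c = a := by
        rw [hk0, MulAut.apply_inv_self, inv_mul_cancel_right]
      have hγk0 : γ k0 = 1 := by
        have e := hGFE k0 (s c)
        rw [heq, hsγ] at e
        have hcval : (↑c : MulAut G) = γ a := rfl
        rw [hcval] at e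
        exact right_eq_mul.mp e
      exact ⟨⟨c, ⟨k0, hk0A, hγk0⟩⟩, Subtype.ext heq⟩
  -- Γ is a p-group
  have hcardeq : Nat.card ↥A = Nat.card ↥Γ * Nat.card K := by
    rw [← Nat.card_prod]
    exact (Nat.card_congr (Equiv.ofBijective F hFbij)).symm
  have hdvd : Nat.card ↥Γ ∣ p ^ 2 := by
    rw [← hA, hcardeq]; exact Dvd.intro _ rfl
  have hΓp : IsPGroup p ↥Γ := by
    obtain ⟨m, hm, hcΓ⟩ := (Nat.dvd_prime_pow hp).mp hdvd
    exact IsPGroup.of_card hcΓ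
  obtain ⟨P, hPle⟩ := hΓp.exists_le_sylow
  have hmem : ∀ b ∈ A, γ b ∈ Subgroup.map (MulAut.conj : G →* MulAut G) A := by
    intro b hb
    have hbΓ : γ b ∈ Γ := ⟨b, hb, rfl⟩
    have := hPle hbΓ
    rwa [hSyl P] at this
  -- A is abelian
  have hcommA : ∀ x ∈ A, ∀ y ∈ A, x * y = y * x := by
    have hc := IsPGroup.commutative_of_card_eq_prime_sq (p := p) hA
    intro x hx y hy
    have := hc ⟨x, hx⟩ ⟨y, hy⟩
    exact Subtype.ext_iff.mp this
  -- automorphisms γ b for b ∈ A fix A pointwise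
  have hfix : ∀ b ∈ A, ∀ a ∈ A, γ b a = a := by
    intro b hb a ha
    obtain ⟨c, hcA, hcb⟩ := Subgroup.mem_map.mp (hmem b hb)
    rw [← hcb, MulAut.conj_apply, hcommA c hcA a ha, mul_inv_cancel_right]
  have part1 : ∀ a ∈ A, ∀ b ∈ A, γ (a * b) = γ a * γ b := by
    intro a ha b hb
    have e := hGFE a b
    rwa [hfix b hb a ha] at e
  -- conj is injective
  have hinj : Function.Injective (MulAut.conj : G → MulAut G) := by
    intro x y hxy
    have hx : ∀ h : G, x * h * x⁻¹ = y * h * y⁻¹ := fun h => by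
      have := congrArg (fun f : MulAut G => f h) hxy
      simpa [MulAut.conj_apply] using this
    have hmemc : y⁻¹ * x ∈ Subgroup.center G := by
      rw [Subgroup.mem_center_iff]
      intro g
      have h2 := congrArg (fun z => y⁻¹ * z * x) (hx g)
      simpa [mul_assoc] using h2.symm
    rw [hcenter, Subgroup.mem_bot] at hmemc
    have := inv_mul_eq_one.mp hmemc
    exact this.symm
  have hmem' : ∀ a : ↥A, ∃ x, x ∈ A ∧ MulAut.conj x = γ ↑a := fun a =>
    Subgroup.mem_map.mp (hmem ↑a a.2)
  choose cc hccA hccb using hmem'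
  refine ⟨part1, MonoidHom.mk' (fun a => ⟨cc a, hccA a⟩) ?_, fun a => (hccb a).symm⟩
  intro a b
  apply Subtype.ext
  show cc (a * b) = cc a * cc b
  apply hinj
  show MulAut.conj (cc (a * b)) = MulAut.conj (cc a * cc b)
  rw [map_mul, hccb, hccb, hccb, Subgroup.coe_mul]
  exact part1 ↑a a.2 ↑b b.2
end

section
/- Let G = C_p × C_p × C_q with p > 2, A its Sylow p-subgroup, B = ⟨b⟩ its Sylow q-subgroup, and γ a gamma function on G. If the group (G, ∘) with g ∘ h = γ(h)(g)·h is abelian, then B ≤ ker(γ) and γ(a) restricted to B is trivial for all a ∈ A. -/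
section CircAux
variable {G : Type*} [CommGroup G] (γ : G → MulAut G)

def circMul (g h : G) : G := γ h g * h

def circInv (g : G) : G := (γ g)⁻¹ g⁻¹

variable (hGFE : ∀ g h : G, γ (γ h g * h) = γ g * γ h)
    (hcommirc : ∀ g h : G, γ h g * h = γ g h * g)

include hcommirc in
theorem gamma_one : ∀ g : G, γ 1 g = g := by
  intro g
  have e := hcommirc g 1
  simpa using e

include hGFE hcommirc in
theorem gamma_comm : ∀ g h : G, γ g * γ h = γ h * γ g := by
  intro g h
  rw [← hGFE h g, ← hGFE g h, hcommirc]

include hGFE hcommirc in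
theorem circ_assoc : ∀ g h k : G,
    circMul γ (circMul γ g h) k = circMul γ g (circMul γ h k) := by
  intro g h k
  show γ k (γ h g * h) * k = γ (γ k h * k) g * (γ k h * k)
  rw [hGFE h k]
  have : (γ h * γ k) g = (γ k * γ h) g := by rw [gamma_comm γ hGFE hcommirc]
  rw [this]
  show γ k (γ h g * h) * k = γ k (γ h g) * (γ k h * k)
  rw [map_mul, mul_assoc]

def Circ (G : Type*) : Type _ := G

def Circ.up {G : Type*} (g : G) : Circ G := g
def Circ.down {G : Type*} (g : Circ G) : G := g

def circGroup : Group (Circ G) where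
  mul g h := Circ.up (circMul γ g.down h.down)
  one := Circ.up (1 : G)
  inv g := Circ.up (circInv γ g.down)
  mul_assoc g h k :=
    congrArg Circ.up (circ_assoc γ hGFE hcommirc g.down h.down k.down)
  one_mul g := by
    show Circ.up (circMul γ (1 : G) g.down) = g
    show γ g.down (1 : G) * g.down = g.down
    simp
  mul_one g := by
    show Circ.up (circMul γ g.down (1 : G)) = g
    show γ (1 : G) g.down * (1 : G) = g.down
    simp [gamma_one γ hcommirc]
  inv_mul_cancel g := by
    show Circ.up (circMul γ (circInv γ g.down) g.down) = Circ.up 1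
    show γ g.down ((γ g.down)⁻¹ g.down⁻¹) * g.down = 1
    rw [MulAut.inv_def, MulEquiv.apply_symm_apply, inv_mul_cancel]

end CircAux

/-- arithmetic helper -/
theorem stmt15_arith {p q n : ℕ} (hp : p.Prime) (hq : q.Prime)
    (h1 : p ^ 2 ∣ n) (h2 : n ∣ p ^ 2 * q) (h3 : ¬ q ∣ n) : n = p ^ 2 := by
  obtain ⟨t, ht⟩ := h1
  subst ht
  have hp2pos : 0 < p ^ 2 := pow_pos hp.pos 2
  have htq : t ∣ q := (mul_dvd_mul_iff_left hp2pos.ne').mp h2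
  rcases (Nat.Prime.eq_one_or_self_of_dvd hq t htq) with h | h
  · rw [h, mul_one]
  · exact absurd ⟨p ^ 2, by rw [h]; ring⟩ h3

theorem stmt15_arith' {p q n : ℕ} (hp : p.Prime) (hq : q.Prime)
    (h1 : q ∣ n) (h2 : n ∣ p ^ 2 * q) (h3 : ¬ p ∣ n) : n = q := by
  obtain ⟨t, ht⟩ := h1
  subst ht
  have hqpos : 0 < q := hq.pos
  have htp : t ∣ p ^ 2 := by
    have : q * t ∣ q * p ^ 2 := by rwa [mul_comm (p ^ 2) q] at h2
    exact (mul_dvd_mul_iff_left hqpos.ne').mp this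
  rcases eq_or_ne t 1 with h | hne
  · rw [h, mul_one]
  · exfalso
    obtain ⟨r, hr, hrt⟩ := Nat.exists_prime_and_dvd hne
    have hrp : r = p := by
      have : r ∣ p ^ 2 := hrt.trans htp
      exact (Nat.prime_dvd_prime_iff_eq hr hp).mp (hr.dvd_of_dvd_pow this)
    exact h3 (hrp ▸ (hrt.trans ⟨q, mul_comm q t⟩))

/-- Let `G = C_p × C_p × C_q` (abelian of order `p²q` with elementary abelian
Sylow `p`-subgroup `A` and Sylow `q`-subgroup `⟨b⟩`), and let `γ` be a gamma
function on `G`. If the circle operation `g ∘ h = γ(h)(g)·h` is commutative,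
then `⟨b⟩ ≤ ker γ` and `γ(a)` restricts to the identity on `⟨b⟩` for all
`a ∈ A`. -/
theorem stmt15 {G : Type*} [CommGroup G] [Fintype G] {p q : ℕ}
    (hp : p.Prime) (hq : q.Prime) (hp2 : 2 < p) (hpq : p ≠ q)
    (hcard : Fintype.card G = p ^ 2 * q)
    (A : Subgroup G) (hA : Nat.card A = p ^ 2) (hel : ∀ x ∈ A, x ^ p = 1)
    (b : G) (hb : orderOf b = q)
    (γ : G → MulAut G)
    (hGFE : ∀ g h : G, γ (γ h g * h) = γ g * γ h)
    (hcommirc : ∀ g h : G, γ h g * h = γ g h * g) :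
    (∀ x ∈ Subgroup.zpowers b, γ x = 1) ∧
    (∀ a ∈ A, ∀ x ∈ Subgroup.zpowers b, γ a x = x) := by
  haveI : Fact p.Prime := ⟨hp⟩
  haveI : Fact q.Prime := ⟨hq⟩
  have hcardG : Nat.card G = p ^ 2 * q := by
    rw [Nat.card_eq_fintype_card, hcard]
  have hcop : Nat.Coprime p q := (Nat.coprime_primes hp hq).mpr hpq
  -- characterization of A as p²-torsion
  have critA : ∀ x : G, x ∈ A ↔ x ^ p ^ 2 = 1 := by
    set S : Subgroup G := (powMonoidHom (p ^ 2) : G →* G).ker with hS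
    have hmemS : ∀ x : G, x ∈ S ↔ x ^ p ^ 2 = 1 := by
      intro x
      rw [hS, MonoidHom.mem_ker, powMonoidHom_apply]
    have hAS : A ≤ S := by
      intro x hx
      rw [hmemS, show p ^ 2 = p * p from sq p, pow_mul, hel x hx, one_pow]
    have h1 : p ^ 2 ∣ Nat.card S := hA ▸ Subgroup.card_dvd_of_le hAS
    have h2 : Nat.card S ∣ p ^ 2 * q := hcardG ▸ Subgroup.card_subgroup_dvd_card S
    have h3 : ¬ q ∣ Nat.card S := by
      intro hdvd
      obtain ⟨x, hxord⟩ := exists_prime_orderOf_dvd_card' (G := S) q hdvd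
      have hx2 : x ^ p ^ 2 = 1 := by
        apply Subtype.ext
        rw [SubgroupClass.coe_pow, OneMemClass.coe_one]
        exact (hmemS x).mp x.2
      have : q ∣ p ^ 2 := hxord ▸ orderOf_dvd_of_pow_eq_one hx2
      exact hpq ((Nat.prime_dvd_prime_iff_eq hq hp).mp (hq.dvd_of_dvd_pow this)).symm
    have hScard : Nat.card S = p ^ 2 := stmt15_arith hp hq h1 h2 h3
    have : A = S := Subgroup.eq_of_le_of_card_ge hAS (by rw [hA, hScard])
    intro x
    rw [this, hmemS]
  -- characterization of ⟨b⟩ as q-torsion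
  have critB : ∀ x : G, x ∈ Subgroup.zpowers b ↔ x ^ q = 1 := by
    set T : Subgroup G := (powMonoidHom q : G →* G).ker with hT
    have hmemT : ∀ x : G, x ∈ T ↔ x ^ q = 1 := by
      intro x
      rw [hT, MonoidHom.mem_ker, powMonoidHom_apply]
    have hBT : Subgroup.zpowers b ≤ T := by
      rw [Subgroup.zpowers_le, hmemT, ← hb]
      exact pow_orderOf_eq_one b
    have hBcard : Nat.card (Subgroup.zpowers b) = q := by
      rw [Nat.card_zpowers, hb]
    have h1 : q ∣ Nat.card T := hBcard ▸ Subgroup.card_dvd_of_le hBT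
    have h2 : Nat.card T ∣ p ^ 2 * q := hcardG ▸ Subgroup.card_subgroup_dvd_card T
    have h3 : ¬ p ∣ Nat.card T := by
      intro hdvd
      obtain ⟨x, hxord⟩ := exists_prime_orderOf_dvd_card' (G := T) p hdvd
      have hx2 : x ^ q = 1 := by
        apply Subtype.ext
        rw [SubgroupClass.coe_pow, OneMemClass.coe_one]
        exact (hmemT x).mp x.2
      have : p ∣ q := hxord ▸ orderOf_dvd_of_pow_eq_one hx2
      exact hpq ((Nat.prime_dvd_prime_iff_eq hp hq).mp this)
    have hTcard : Nat.card T = q := stmt15_arith' hp hq h1 h2 h3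
    have : Subgroup.zpowers b = T :=
      Subgroup.eq_of_le_of_card_ge hBT (by rw [hBcard, hTcard])
    intro x
    rw [this, hmemT]
  -- automorphisms preserve A and B
  have autA : ∀ (φ : MulAut G) (x : G), x ∈ A → φ x ∈ A := by
    intro φ x hx
    rw [critA] at hx ⊢
    rw [← map_pow, hx, map_one]
  have autB : ∀ (φ : MulAut G) (x : G), x ∈ Subgroup.zpowers b →
      φ x ∈ Subgroup.zpowers b := by
    intro φ x hx
    rw [critB] at hx ⊢
    rw [← map_pow, hx, map_one]
  -- trivial intersection
  have hint : ∀ x : G, x ∈ A → x ∈ Subgroup.zpowers b → x = 1 := by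
    intro x hxA hxB
    have h1 : orderOf x ∣ p := orderOf_dvd_of_pow_eq_one (hel x hxA)
    have h2 : orderOf x ∣ q := orderOf_dvd_of_pow_eq_one ((critB x).mp hxB)
    have : orderOf x ∣ 1 := hcop ▸ Nat.dvd_gcd h1 h2
    rw [orderOf_eq_one_iff.mp (Nat.dvd_one.mp this)]
  -- the symmetric relation and part 2
  have hsym : ∀ a : G, a ∈ A → ∀ x : G, x ∈ Subgroup.zpowers b →
      γ a x = x ∧ γ x a = a := by
    intro a ha x hx
    have e := hcommirc a x
    have d2 : γ x a * a⁻¹ = γ a x * x⁻¹ := by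
      rw [← div_eq_mul_inv, ← div_eq_mul_inv, div_eq_div_iff_mul_eq_mul]
      exact e
    have d1 : γ x a * a⁻¹ ∈ A := A.mul_mem (autA (γ x) a ha) (A.inv_mem ha)
    have d3 : γ x a * a⁻¹ ∈ Subgroup.zpowers b := by
      rw [d2]
      exact (Subgroup.zpowers b).mul_mem (autB (γ a) x hx)
        ((Subgroup.zpowers b).inv_mem hx)
    have dd : γ x a * a⁻¹ = 1 := hint _ d1 d3
    constructor
    · have : γ a x * x⁻¹ = 1 := d2 ▸ dd
      rw [mul_inv_eq_one] at this
      exact this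
    · rw [mul_inv_eq_one] at dd
      exact dd
  have hγone : γ (1 : G) = 1 := by
    apply MulEquiv.ext
    intro g
    exact gamma_one γ hcommirc g
  -- circle group structure
  letI : Group (Circ G) := circGroup γ hGFE hcommirc
  -- circle powers and γ
  have hpow : ∀ (x : G) (n : ℕ), γ (((Circ.up x) ^ n).down) = (γ x) ^ n := by
    intro x n
    induction n with
    | zero =>
      rw [pow_zero, pow_zero]
      exact hγone
    | succ n ih =>
      rw [pow_succ, pow_succ, ← ih]
      show γ (circMul γ ((Circ.up x ^ n).down) x) = _
      show γ (γ x ((Circ.up x ^ n).down) * x) = _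
      rw [hGFE]
  -- B is closed under the circle operations
  have hBc : ∀ x : G, x ∈ Subgroup.zpowers b → ((γ x) ^ q : MulAut G) = 1 := by
    intro x hx
    let Bc : Subgroup (Circ G) :=
      { carrier := {y : Circ G | y.down ∈ Subgroup.zpowers b}
        mul_mem' := by
          intro y z hy hz
          show (γ z.down (y.down) * z.down) ∈ Subgroup.zpowers b
          exact (Subgroup.zpowers b).mul_mem (autB _ _ hy) hz
        one_mem' := by
          show (1 : G) ∈ Subgroup.zpowers b
          exact Subgroup.one_mem _
        inv_mem' := by
          intro y hy
          show ((γ y.down)⁻¹ (y.down)⁻¹) ∈ Subgroup.zpowers b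
          exact autB _ _ ((Subgroup.zpowers b).inv_mem hy) }
    have hBcard : Nat.card Bc = q := by
      have : Nat.card Bc = Nat.card (Subgroup.zpowers b) :=
        Nat.card_congr ⟨fun y => ⟨y.1.down, y.2⟩, fun y => ⟨Circ.up y.1, y.2⟩,
          fun y => rfl, fun y => rfl⟩
      rw [this, Nat.card_zpowers, hb]
    have hord : orderOf (Circ.up x) ∣ q := by
      have := Bc.orderOf_dvd_natCard (x := Circ.up x) hx
      rwa [hBcard] at this
    have hq1 : (Circ.up x) ^ q = 1 := orderOf_dvd_iff_pow_eq_one.mp hord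
    have := hpow x q
    rw [hq1] at this
    rw [← this]
    show ((γ ((1 : G))) : MulAut G) = 1
    exact hγone
  -- γ x fixes B for x ∈ B
  have key : ∀ x ∈ Subgroup.zpowers b, ∀ y ∈ Subgroup.zpowers b, γ x y = y := by
    intro x hx y hy
    by_cases hx1 : x = 1
    · rw [hx1, hγone]; rfl
    · have hordx : orderOf x = q := by
        have h1 : orderOf x ∣ q := orderOf_dvd_of_pow_eq_one ((critB x).mp hx)
        rcases (Nat.Prime.eq_one_or_self_of_dvd hq _ h1) with h | h
        · exact absurd (orderOf_eq_one_iff.mp h) hx1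
        · exact h
      have hzp : Subgroup.zpowers x = Subgroup.zpowers b := by
        apply Subgroup.eq_of_le_of_card_ge (Subgroup.zpowers_le.mpr hx)
        rw [Nat.card_zpowers, Nat.card_zpowers, hordx, hb]
      obtain ⟨m, hm⟩ := Subgroup.mem_zpowers_iff.mp
        (hzp ▸ (autB (γ x) x hx) : γ x x ∈ Subgroup.zpowers x)
      have hn : ∀ n : ℕ, ((γ x) ^ n) x = x ^ (m ^ n : ℤ) := by
        intro n
        induction n with
        | zero => simp
        | succ n ih =>
          rw [pow_succ']
          show (γ x) (((γ x) ^ n) x) = _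
          rw [ih, map_zpow, ← hm, ← zpow_mul, ← pow_succ']
      have hfix : γ x x = x := by
        have h1 : x ^ (m ^ q : ℤ) = x := by
          rw [← hn q, hBc x hx]
          rfl
        have hx1' : x ^ (m ^ q - 1 : ℤ) = 1 := by
          rw [zpow_sub, h1]
          simp
        have h2 : ((q : ℕ) : ℤ) ∣ m ^ q - 1 := by
          have := orderOf_dvd_iff_zpow_eq_one.mpr hx1'
          rwa [hordx] at this
        have h3 : ((m ^ q - 1 : ℤ) : ZMod q) = 0 :=
          (ZMod.intCast_zmod_eq_zero_iff_dvd _ q).mpr h2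
        have h4 : ((m : ZMod q)) - 1 = 0 := by
          push_cast at h3
          rwa [ZMod.pow_card] at h3
        have h5 : ((q : ℕ) : ℤ) ∣ m - 1 := by
          rw [← ZMod.intCast_zmod_eq_zero_iff_dvd]
          push_cast
          exact h4
        have h6 : x ^ (m - 1 : ℤ) = 1 := by
          rw [← orderOf_dvd_iff_zpow_eq_one, hordx]
          exact h5
        calc γ x x = x ^ m := hm.symm
          _ = x ^ (m - 1 : ℤ) * x ^ (1 : ℤ) := by rw [← zpow_add]; ring_nf
          _ = x := by rw [h6, one_mul, zpow_one]
      obtain ⟨j, hj⟩ := Subgroup.mem_zpowers_iff.mp (hzp ▸ hy : y ∈ Subgroup.zpowers x)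
      rw [← hj, map_zpow, hfix]
  -- decomposition
  have decomp : ∀ g : G, ∃ a ∈ A, ∃ y ∈ Subgroup.zpowers b, g = a * y := by
    intro g
    have hcop2 : IsCoprime ((p : ℤ) ^ 2) (q : ℤ) := by
      have := Nat.Coprime.isCoprime (Nat.Coprime.pow_left 2 hcop)
      push_cast at this
      exact this
    obtain ⟨u, v, huv⟩ := hcop2
    have hgcard : g ^ ((p : ℤ) ^ 2 * (q : ℤ)) = 1 := by
      have : g ^ (p ^ 2 * q) = 1 := by
        rw [← hcard]
        exact pow_card_eq_one
      rw [← zpow_natCast g] at this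
      push_cast at this ⊢
      exact this
    refine ⟨g ^ ((q : ℤ) * v), ?_, g ^ ((p : ℤ) ^ 2 * u), ?_, ?_⟩
    · rw [critA, ← zpow_natCast (g ^ ((q : ℤ) * v)), ← zpow_mul]
      have : (q : ℤ) * v * (p ^ 2 : ℕ) = ((p : ℤ) ^ 2 * (q : ℤ)) * v := by
        push_cast
        ring
      rw [this, zpow_mul, hgcard, one_zpow]
    · rw [critB, ← zpow_natCast (g ^ ((p : ℤ) ^ 2 * u)), ← zpow_mul]
      have : (p : ℤ) ^ 2 * u * (q : ℕ) = ((p : ℤ) ^ 2 * (q : ℤ)) * u := by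
        push_cast
        ring
      rw [this, zpow_mul, hgcard, one_zpow]
    · rw [← zpow_add]
      have : (q : ℤ) * v + (p : ℤ) ^ 2 * u = 1 := by
        rw [← huv]
        ring
      rw [this, zpow_one]
  refine ⟨?_, ?_⟩
  · intro x hx
    apply MulEquiv.ext
    intro g
    obtain ⟨a, ha, y, hy, rfl⟩ := decomp g
    rw [map_mul, (hsym a ha x hx).2, key x hx y hy]
    rfl
  · intro a ha x hx
    exact (hsym a ha x hx).1
end

section
/- Let G be a group of order p²q with elementary abelian Sylow p-subgroup A = ⟨a₁, a₂⟩, and let γ : A → Aut(G) be a map with γ(a₂) = 1 and γ(a₁) = φ where φ fixes a₂ and sends a₁ to a₁a₂^k for some k. Then [A, γ(A)] ⊆ ⟨a₂⟩, and consequently γ extends to a (unique) relative gamma function on A if and only if γ is a group homomorphism on A. -/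
/-- Appendix Lemma: let `A = ⟨a₁, a₂⟩ ≅ C_p × C_p` be a Sylow `p`-subgroup of a
group `G` of order `p²q`, and `γ : A → Aut(G)` with values in `⟨φ⟩`, where
`γ(a₂) = 1` and `γ(a₁) = φ` with `φ(a₂) = a₂`, `φ(a₁) = a₁ a₂^k`. Then
`[A, γ(A)] ≤ ⟨a₂⟩`, and consequently `γ` is a relative gamma function on `A`
if and only if it is a group homomorphism. -/
theorem stmt18 {G : Type*} [Group G] [Fintype G] {p q k : ℕ}
    (hp : p.Prime) (hq : q.Prime) (hp2 : 2 < p) (hpq : p ≠ q)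
    (hcard : Fintype.card G = p ^ 2 * q)
    (a₁ a₂ : G) (ha₁ : orderOf a₁ = p) (ha₂ : orderOf a₂ = p)
    (hcomm : a₁ * a₂ = a₂ * a₁)
    (A : Subgroup G) (hAdef : A = Subgroup.closure {a₁, a₂})
    (h1 : a₁ ∈ A) (h2 : a₂ ∈ A) (hAcard : Nat.card A = p ^ 2)
    (φ : MulAut G) (hφ2 : φ a₂ = a₂) (hφ1 : φ a₁ = a₁ * a₂ ^ k)
    (γ : A → MulAut G)
    (hrange : ∀ x : A, ∃ n : ℤ, γ x = φ ^ n)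
    (hγ1 : γ ⟨a₁, h1⟩ = φ) (hγ2 : γ ⟨a₂, h2⟩ = 1) :
    (Subgroup.closure {g : G | ∃ x y : A, g = (x : G)⁻¹ * γ y (x : G)}
      ≤ Subgroup.zpowers a₂) ∧
    (((∀ x y : A, γ x (y : G) ∈ A) ∧
      (∀ x y : A, ∀ hm : γ y (x : G) * (y : G) ∈ A,
        γ ⟨γ y (x : G) * (y : G), hm⟩ = γ x * γ y)) ↔
     (∀ x y : A, γ (x * y) = γ x * γ y)) := by
  subst hAdef
  have hc : Commute a₁ a₂ := hcomm
  -- φ⁻¹ on generators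
  have hinv2 : φ⁻¹ a₂ = a₂ := by
    conv_lhs => rw [← hφ2]
    exact φ.symm_apply_apply a₂
  have hinv1 : φ⁻¹ a₁ = a₁ * a₂ ^ (-(k : ℤ)) := by
    apply φ.injective
    rw [MulAut.apply_inv_self, map_mul, map_zpow, hφ1, hφ2, mul_assoc,
      ← zpow_natCast a₂ k, ← zpow_add, add_neg_cancel, zpow_zero, mul_one]
  -- iterates of φ on generators
  have hφ2' : ∀ ℓ : ℤ, (φ ^ ℓ) a₂ = a₂ := by
    intro ℓ
    induction ℓ using Int.induction_on with
    | zero => simp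
    | succ n ih => rw [zpow_add_one, MulAut.mul_apply, hφ2, ih]
    | pred n ih => rw [zpow_sub_one, MulAut.mul_apply, hinv2, ih]
  have hφ1' : ∀ ℓ : ℤ, (φ ^ ℓ) a₁ = a₁ * a₂ ^ (ℓ * k) := by
    intro ℓ
    induction ℓ using Int.induction_on with
    | zero => simp
    | succ n ih =>
      rw [zpow_add_one, MulAut.mul_apply, hφ1, map_mul, map_pow, hφ2' n, ih,
        mul_assoc, ← zpow_natCast a₂ k, ← zpow_add]
      ring_nf
    | pred n ih =>
      rw [zpow_sub_one, MulAut.mul_apply, hinv1, map_mul, map_zpow, hφ2' (-n), ih,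
        mul_assoc, ← zpow_add]
      ring_nf
  -- decomposition of elements of A
  have hdec : ∀ x ∈ Subgroup.closure {a₁, a₂}, ∃ m n : ℤ, x = a₁ ^ m * a₂ ^ n := by
    intro x hx
    induction hx using Subgroup.closure_induction with
    | mem x hx =>
      rcases hx with h | h
      · exact ⟨1, 0, by simp [h]⟩
      · exact ⟨0, 1, by simp [Set.mem_singleton_iff.1 h]⟩
    | one => exact ⟨0, 0, by simp⟩
    | mul x y hx hy ihx ihy =>
      obtain ⟨m, n, rfl⟩ := ihx
      obtain ⟨m', n', rfl⟩ := ihy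
      refine ⟨m + m', n + n', ?_⟩
      rw [zpow_add, zpow_add, mul_assoc, mul_assoc]
      congr 1
      rw [← mul_assoc, ← mul_assoc, (hc.zpow_zpow m' n).symm.eq]
    | inv x hx ih =>
      obtain ⟨m, n, rfl⟩ := ih
      exact ⟨-m, -n, by
        rw [mul_inv_rev, ← zpow_neg, ← zpow_neg]
        exact (hc.zpow_zpow (-m) (-n)).symm.eq⟩
  -- a₂ commutes with everything in A
  have hcen : ∀ x ∈ Subgroup.closure {a₁, a₂}, Commute x a₂ := by
    intro x hx
    obtain ⟨m, n, rfl⟩ := hdec x hx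
    exact ((hc.zpow_left m).mul_left ((Commute.refl a₂).zpow_left n))
  -- key computation
  have hkey : ∀ (ℓ : ℤ) (x : G), x ∈ Subgroup.closure {a₁, a₂} →
      ∃ t : ℤ, (φ ^ ℓ) x = x * a₂ ^ t := by
    intro ℓ x hx
    obtain ⟨m, n, rfl⟩ := hdec x hx
    refine ⟨ℓ * k * m, ?_⟩
    rw [map_mul, map_zpow, map_zpow, hφ1' ℓ, hφ2' ℓ,
      (hc.zpow_right (ℓ * k)).mul_zpow, ← zpow_mul]
    group
  set b : Subgroup.closure ({a₁, a₂} : Set G) := ⟨a₂, h2⟩ with hb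
  -- coercion computation for γ y x * y
  have hyx : ∀ (x y : Subgroup.closure ({a₁, a₂} : Set G)) (n t : ℤ),
      (φ ^ n) (x : G) = (x : G) * a₂ ^ t →
      (φ ^ n) (x : G) * (y : G) = ((x * y * b ^ t : Subgroup.closure ({a₁, a₂} : Set G)) : G) := by
    intro x y n t ht
    rw [ht]
    push_cast
    rw [mul_assoc, mul_assoc]
    congr 1
    exact (((hcen y y.2).zpow_right t).symm.eq)
  constructor
  · rw [Subgroup.closure_le]
    rintro g ⟨x, y, rfl⟩
    obtain ⟨n, hn⟩ := hrange y
    obtain ⟨t, ht⟩ := hkey n x x.2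
    rw [hn, ht, inv_mul_cancel_left]
    exact Subgroup.mem_zpowers_iff.2 ⟨t, rfl⟩
  constructor
  · rintro ⟨hmem, hii⟩ x y
    -- γ is invariant under multiplication by b
    have F1 : ∀ z : Subgroup.closure ({a₁, a₂} : Set G), γ (z * b) = γ z := by
      intro z
      have hm : γ b (z : G) * (b : G) ∈ Subgroup.closure ({a₁, a₂} : Set G) := by
        rw [hγ2]
        exact mul_mem z.2 h2
      have hsub : (⟨γ b (z : G) * (b : G), hm⟩ : Subgroup.closure ({a₁, a₂} : Set G))
          = z * b := Subtype.ext (show γ b (z : G) * (b : G) = (z : G) * (b : G) by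
            rw [hγ2]; rfl)
      have h2' := hii z b hm
      rw [hsub] at h2'
      rw [h2', hγ2, mul_one]
    have F : ∀ (t : ℤ) (z : Subgroup.closure ({a₁, a₂} : Set G)), γ (z * b ^ t) = γ z := by
      intro t
      induction t using Int.induction_on with
      | zero => simp
      | succ n ih =>
        intro z
        rw [show z * b ^ ((n : ℤ) + 1) = z * b ^ (n : ℤ) * b by rw [zpow_add_one, mul_assoc],
          F1, ih]
      | pred n ih =>
        intro z
        have := F1 (z * b ^ (-(n : ℤ) - 1))
        rw [mul_assoc, ← zpow_add_one, sub_add_cancel] at this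
        rw [← this]
        exact ih z
    obtain ⟨n, hn⟩ := hrange y
    obtain ⟨t, ht⟩ := hkey n x x.2
    have hm : γ y (x : G) * (y : G) ∈ Subgroup.closure ({a₁, a₂} : Set G) := by
      rw [hn, hyx x y n t ht]
      exact (x * y * b ^ t).2
    have := hii x y hm
    rwa [show (⟨γ y (x : G) * (y : G), hm⟩ : Subgroup.closure ({a₁, a₂} : Set G))
        = x * y * b ^ t from Subtype.ext (show γ y (x : G) * (y : G) = _ by
          rw [hn]; exact hyx x y n t ht),
      F t (x * y)] at this
  · intro hhom
    have fb : ∀ t : ℤ, γ (b ^ t) = 1 := by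
      intro t
      have : (MonoidHom.mk' γ hhom) (b ^ t) = ((MonoidHom.mk' γ hhom) b) ^ t :=
        map_zpow _ b t
      simpa [hγ2] using this
    constructor
    · intro x y
      obtain ⟨n, hn⟩ := hrange x
      obtain ⟨t, ht⟩ := hkey n y y.2
      rw [hn, ht]
      exact mul_mem y.2 (Subgroup.zpow_mem _ h2 t)
    · intro x y hm
      obtain ⟨n, hn⟩ := hrange y
      obtain ⟨t, ht⟩ := hkey n x x.2
      rw [show (⟨γ y (x : G) * (y : G), hm⟩ : Subgroup.closure ({a₁, a₂} : Set G))
          = x * y * b ^ t from Subtype.ext (show γ y (x : G) * (y : G) = _ by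
            rw [hn]; exact hyx x y n t ht),
        hhom, hhom, fb t, mul_one]
end
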